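/- arXiv:2604.02357 — 10 statements merged into one kernel-verified Lean document; each statement's English description precedes it below -/
import Mathlib

section
/- Let n ≥ 1, s ∈ (0,1) and ε > 0. Suppose φ : ℝⁿ → ℝ is continuous, vanishes at infinity, φ(y) = 0 for all |y| ≤ ε, and ∫_{ℝⁿ} φ(y) · |y − x|^{-(n+2s)} dy = 0 for every x with |x| < ε. Then for every m ∈ ℕ and every multi-index β ∈ ℕ₀ⁿ with |β| ≤ m one has ∫_{ℝⁿ} φ(y) · y^β · |y|^{-(2m+n+2s)} dy = 0 (where y^β = y₁^{β₁}⋯yₙ^{βₙ}). -/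
open MeasureTheory Filter

namespace UCPStep
variable {n : ℕ}

noncomputable abbrev Eu (n : ℕ) := EuclideanSpace ℝ (Fin n)

def mon (β : Fin n → ℕ) (z : Eu n) : ℝ := ∏ i, (z i) ^ (β i)

noncomputable def itg (φ : Eu n → ℝ) (β : Fin n → ℕ) (c : ℝ) (x : Eu n) (y : Eu n) : ℝ :=
  φ y * mon β (y - x) * ‖y - x‖ ^ (-c)

noncomputable def KK (φ : Eu n → ℝ) (β : Fin n → ℕ) (c : ℝ) (x : Eu n) : ℝ :=
  ∫ y : Eu n, itg φ β c x y

lemma coord_le_norm (z : Eu n) (i : Fin n) : |z i| ≤ ‖z‖ := by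
  rw [EuclideanSpace.norm_eq, ← Real.sqrt_sq (abs_nonneg (z i))]
  apply Real.sqrt_le_sqrt
  rw [sq_abs]
  exact Finset.single_le_sum (f := fun j => ‖z j‖ ^ 2) (fun j _ => by positivity)
    (Finset.mem_univ i) |>.trans_eq' (by rw [Real.norm_eq_abs, sq_abs])

lemma norm_sq_eq (z : Eu n) : ‖z‖ ^ 2 = ∑ i, (z i) ^ 2 := by
  rw [EuclideanSpace.norm_eq, Real.sq_sqrt (by positivity)]
  simp [Real.norm_eq_abs, sq_abs]

lemma abs_mon_le (β : Fin n → ℕ) (z : Eu n) : |mon β z| ≤ ‖z‖ ^ (∑ i, β i) := by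
  rw [mon, Finset.abs_prod, ← Finset.prod_pow_eq_pow_sum]
  refine Finset.prod_le_prod (fun i _ => by positivity) (fun i _ => ?_)
  rw [abs_pow]
  exact pow_le_pow_left₀ (abs_nonneg _) (coord_le_norm z i) _

lemma rpow_sq_helper {u : ℝ} (hu : 0 ≤ u) (c : ℝ) : (u ^ 2 : ℝ) ^ (-c / 2) = u ^ (-c) := by
  rw [← Real.rpow_natCast u 2, ← Real.rpow_mul hu]
  congr 1
  push_cast
  ring

lemma cont_mon (β : Fin n → ℕ) (x : Eu n) : Continuous fun y : Eu n => mon β (y - x) := by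
  unfold mon
  refine continuous_finset_prod _ (fun i _ => ?_)
  exact (((EuclideanSpace.proj i).continuous.comp (continuous_id.sub continuous_const))).pow _

lemma phi_bound (φ : Eu n → ℝ) (hcont : Continuous φ)
    (hinf : Tendsto φ (cocompact (Eu n)) (nhds 0)) :
    ∃ C : ℝ, 0 ≤ C ∧ ∀ y, |φ y| ≤ C := by
  have h1 : {y : Eu n | φ y ∈ Metric.ball (0:ℝ) 1} ∈ cocompact (Eu n) :=
    hinf (Metric.ball_mem_nhds (0:ℝ) one_pos)
  obtain ⟨K, hK, hKsub⟩ := mem_cocompact.mp h1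
  obtain ⟨C, hC⟩ := hK.exists_bound_of_continuousOn hcont.continuousOn
  refine ⟨max C 1, le_trans zero_le_one (le_max_right _ _), fun y => ?_⟩
  by_cases hy : y ∈ K
  · exact le_trans (hC y hy) (le_max_left _ _)
  · have := hKsub hy
    simp only [Set.mem_setOf_eq, Metric.mem_ball, dist_zero_right, Real.norm_eq_abs] at this
    exact le_trans this.le (le_max_right _ _)

lemma itg_continuous {ε : ℝ} (φ : Eu n → ℝ) (hcont : Continuous φ)
    (hvan : ∀ y : Eu n, ‖y‖ ≤ ε → φ y = 0)
    {x : Eu n} (hx : ‖x‖ < ε) (β : Fin n → ℕ) (c : ℝ) :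
    Continuous (itg φ β c x) := by
  rw [continuous_iff_continuousAt]
  intro y
  by_cases hy : y = x
  · have hyb : y ∈ Metric.ball (0 : Eu n) ε := by
      simp only [Metric.mem_ball, dist_zero_right, hy]
      exact hx
    have hU : itg φ β c x =ᶠ[nhds y] (fun _ => (0:ℝ)) := by
      filter_upwards [IsOpen.mem_nhds Metric.isOpen_ball hyb] with y' hy'
      have hy'2 : φ y' = 0 := by
        refine hvan y' ?_
        have := hy'
        simp only [Metric.mem_ball, dist_zero_right] at this
        exact this.le
      simp [itg, hy'2]
    exact hU.continuousAt
  · refine ContinuousAt.mul (ContinuousAt.mul hcont.continuousAt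
      (cont_mon β x).continuousAt) ?_
    refine ContinuousAt.rpow_const ?_ (Or.inl ?_)
    · exact (continuous_norm.comp (continuous_id.sub continuous_const)).continuousAt
    · exact norm_ne_zero_iff.mpr (sub_ne_zero.mpr hy)

/-- the constant in the lower kernel bound -/
noncomputable def kap (ε r : ℝ) : ℝ := (1 - r/ε) * (ε/(1+ε))

lemma kap_pos {ε r : ℝ} (hε : 0 < ε) (hrε : r < ε) : 0 < kap ε r := by
  have h1 : 0 < 1 - r/ε := by
    rw [sub_pos, div_lt_one hε]
    exact hrε
  have h2 : 0 < ε/(1+ε) := by positivity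
  exact mul_pos h1 h2

lemma kernel_lower {ε r : ℝ} (hε : 0 < ε) (hr0 : 0 ≤ r) (hrε : r < ε)
    {x' y : Eu n} (hx' : ‖x'‖ ≤ r) (hy : ε ≤ ‖y‖) :
    kap ε r * (1 + ‖y‖) ≤ ‖y - x'‖ := by
  have h1 : ‖y‖ - r ≤ ‖y - x'‖ := by
    have := norm_sub_norm_le y x'
    linarith [le_trans (norm_sub_norm_le y x') (le_refl ‖y - x'‖), hx']
  refine le_trans ?_ h1
  have hε1 : (0:ℝ) < 1 + ε := by linarith
  have hk : kap ε r = (ε - r)/(1+ε) := by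
    rw [kap]
    field_simp
  rw [hk, div_mul_eq_mul_div, div_le_iff₀ hε1]
  nlinarith [norm_nonneg y]

lemma kernel_upper {r : ℝ} (hr0 : 0 ≤ r) {x' y : Eu n} (hx' : ‖x'‖ ≤ r) :
    ‖y - x'‖ ≤ (1 + r) * (1 + ‖y‖) := by
  have h1 : ‖y - x'‖ ≤ ‖y‖ + ‖x'‖ := norm_sub_le y x'
  nlinarith [norm_nonneg y]

lemma itg_bound {ε : ℝ} (φ : Eu n → ℝ) {C : ℝ} (hC : ∀ y, |φ y| ≤ C) (hC0 : 0 ≤ C)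
    (hvan : ∀ y : Eu n, ‖y‖ ≤ ε → φ y = 0) (hε : 0 < ε)
    {r : ℝ} (hr0 : 0 ≤ r) (hrε : r < ε) {x' : Eu n} (hx' : ‖x'‖ ≤ r)
    (β : Fin n → ℕ) {c : ℝ} (hc : 0 ≤ c) (y : Eu n) :
    |itg φ β c x' y| ≤
      (C * (1+r) ^ (∑ i, β i) * (kap ε r) ^ (-c)) * (1+‖y‖) ^ ((∑ i, β i : ℝ) - c) := by
  have hκ := kap_pos hε hrε
  have hy0 : (0:ℝ) < 1 + ‖y‖ := by positivity
  by_cases hy : ‖y‖ < ε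
  · rw [itg, hvan y hy.le]
    simp only [zero_mul, abs_zero]
    positivity
  · push_neg at hy
    have hlow := kernel_lower hε hr0 hrε hx' hy
    have hup := kernel_upper hr0 (y := y) hx'
    have hzpos : (0:ℝ) < ‖y - x'‖ := lt_of_lt_of_le (by positivity) hlow
    set d := ∑ i, β i with hd
    have h1 : |itg φ β c x' y| ≤ C * ‖y - x'‖ ^ d * ‖y - x'‖ ^ (-c) := by
      rw [itg, abs_mul, abs_mul]
      have h2 : |‖y - x'‖ ^ (-c)| = ‖y - x'‖ ^ (-c) := abs_of_nonneg (Real.rpow_nonneg hzpos.le _)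
      rw [h2]
      refine mul_le_mul_of_nonneg_right ?_ (Real.rpow_nonneg hzpos.le _)
      exact mul_le_mul (hC y) (abs_mon_le β _) (abs_nonneg _) hC0
    refine le_trans h1 ?_
    have h3 : ‖y - x'‖ ^ d ≤ ((1+r) * (1+‖y‖)) ^ d := pow_le_pow_left₀ (norm_nonneg _) hup d
    have h4 : ‖y - x'‖ ^ (-c) ≤ (kap ε r * (1+‖y‖)) ^ (-c) :=
      Real.rpow_le_rpow_of_nonpos (by positivity) hlow (neg_nonpos.mpr hc)
    have h5 : C * ‖y - x'‖ ^ d * ‖y - x'‖ ^ (-c) ≤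
        C * ((1+r) * (1+‖y‖)) ^ d * ((kap ε r * (1+‖y‖)) ^ (-c)) := by
      refine mul_le_mul (mul_le_mul_of_nonneg_left h3 hC0) h4
        (Real.rpow_nonneg hzpos.le _) (by positivity)
    refine le_trans h5 (le_of_eq ?_)
    rw [mul_pow, Real.mul_rpow hκ.le hy0.le, ← Nat.cast_sum, ← hd, sub_eq_add_neg,
      Real.rpow_add hy0, Real.rpow_natCast]
    ring

lemma bound_integrable {M : ℝ} {ρ : ℝ} (hρ : ρ < -(n:ℝ)) :
    Integrable (fun y : Eu n => M * (1+‖y‖) ^ ρ) := by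
  have h : ((Module.finrank ℝ (Eu n) : ℝ)) < -ρ := by
    rw [finrank_euclideanSpace_fin]
    linarith
  have := (integrable_one_add_norm (E := Eu n) (μ := volume) h).const_mul M
  simpa [neg_neg] using this

lemma itg_integrable {ε : ℝ} (φ : Eu n → ℝ) {C : ℝ} (hC : ∀ y, |φ y| ≤ C) (hC0 : 0 ≤ C)
    (hcont : Continuous φ) (hvan : ∀ y : Eu n, ‖y‖ ≤ ε → φ y = 0) (hε : 0 < ε)
    {x : Eu n} (hx : ‖x‖ < ε) (β : Fin n → ℕ) {c : ℝ} (hc : (∑ i, β i : ℝ) + n < c) :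
    Integrable (itg φ β c x) := by
  have hc0 : (0:ℝ) ≤ c := le_of_lt (lt_of_le_of_lt (by positivity) hc)
  refine Integrable.mono' (g := fun y => (C * (1+‖x‖) ^ (∑ i, β i) * (kap ε ‖x‖) ^ (-c)) *
      (1+‖y‖) ^ ((∑ i, β i : ℝ) - c)) ?_ ?_ ?_
  · exact bound_integrable (by linarith)
  · exact (itg_continuous φ hcont hvan hx β c).aestronglyMeasurable
  · exact ae_of_all _ fun y => by
      simpa [Real.norm_eq_abs] using
        itg_bound φ hC hC0 hvan hε (norm_nonneg x) hx (le_refl ‖x‖) β hc0 y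

lemma mon_split (β : Fin n → ℕ) (i : Fin n) (z : Eu n) :
    mon β z = (z i) ^ (β i) * ∏ j ∈ Finset.univ.erase i, (z j) ^ (β j) :=
  (Finset.mul_prod_erase Finset.univ _ (Finset.mem_univ i)).symm

lemma coord_sub_smul_single (w : Eu n) (t : ℝ) (i j : Fin n) :
    (w - t • EuclideanSpace.single i (1:ℝ)) j = w j - t * (if j = i then 1 else 0) := by
  simp [EuclideanSpace.single_apply]

lemma hasDerivAt_pointwise (β : Fin n → ℕ) (c : ℝ) (i : Fin n) (w : Eu n) {t : ℝ}
    (hw : w - t • EuclideanSpace.single i (1:ℝ) ≠ 0) :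
    HasDerivAt (fun τ : ℝ => mon β (w - τ • EuclideanSpace.single i (1:ℝ)) *
        ‖w - τ • EuclideanSpace.single i (1:ℝ)‖ ^ (-c))
      (c * mon (β + Pi.single i 1) (w - t • EuclideanSpace.single i (1:ℝ)) *
        ‖w - t • EuclideanSpace.single i (1:ℝ)‖ ^ (-(c+2))
       - (β i) * mon (β - Pi.single i 1) (w - t • EuclideanSpace.single i (1:ℝ)) *
        ‖w - t • EuclideanSpace.single i (1:ℝ)‖ ^ (-c)) t := by
  set e : Eu n := EuclideanSpace.single i (1:ℝ) with he
  set P : ℝ := ∏ j ∈ Finset.univ.erase i, (w j) ^ (β j) with hP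
  set Q : ℝ → ℝ := fun τ => ‖w‖^2 - 2*(w i)*τ + τ^2 with hQdef
  have hvj : ∀ (τ : ℝ) (j : Fin n), j ≠ i → (w - τ • e) j = w j := by
    intro τ j hj
    rw [he, coord_sub_smul_single, if_neg hj]
    ring
  have hvi : ∀ τ : ℝ, (w - τ • e) i = w i - τ := by
    intro τ
    rw [he, coord_sub_smul_single, if_pos rfl]
    ring
  have hQ : ∀ τ : ℝ, Q τ = ‖w - τ • e‖^2 := by
    intro τ
    rw [norm_sub_sq_real, real_inner_smul_right, he, EuclideanSpace.inner_single_right,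
      norm_smul, EuclideanSpace.norm_single]
    simp [Real.norm_eq_abs, sq_abs]
    ring
  have hmon : ∀ (γ : Fin n → ℕ) (τ : ℝ), (∀ j, j ≠ i → γ j = β j) →
      mon γ (w - τ • e) = (w i - τ) ^ (γ i) * P := by
    intro γ τ hγ
    rw [mon_split γ i, hvi, hP]
    congr 1
    refine Finset.prod_congr rfl (fun j hj => ?_)
    have hj' : j ≠ i := Finset.ne_of_mem_erase hj
    rw [hvj τ j hj', hγ j hj']
  have hQpos : 0 < Q t := by
    rw [hQ]
    have : ‖w - t • e‖ ≠ 0 := norm_ne_zero_iff.mpr hw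
    positivity
  have hQ' : HasDerivAt Q (-(2*(w i)) + 2*t) t := by
    have h1 : HasDerivAt (fun τ:ℝ => ‖w‖^2 - 2*(w i)*τ) (-(2*(w i))) t := by
      simpa using (((hasDerivAt_id t).const_mul (2*(w i))).const_sub (‖w‖^2))
    have h2 : HasDerivAt (fun τ:ℝ => τ^2) (2*t) t := by
      simpa using hasDerivAt_pow 2 t
    exact h1.add h2
  have hR : HasDerivAt (fun τ => (Q τ)^(-c/2))
      ((-(2*(w i)) + 2*t) * (-c/2) * (Q t)^(-c/2 - 1)) t :=
    hQ'.rpow_const (Or.inl hQpos.ne')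
  have hu : HasDerivAt (fun τ:ℝ => (w i - τ)^(β i))
      ((β i) * (w i - t)^(β i - 1) * (-1)) t :=
    ((hasDerivAt_id t).const_sub (w i)).pow (β i)
  have hprod := (hu.const_mul P).mul hR
  have hfun : (fun τ : ℝ => mon β (w - τ • e) * ‖w - τ • e‖ ^ (-c))
      = fun τ : ℝ => (P * (w i - τ)^(β i)) * (Q τ)^(-c/2) := by
    funext τ
    rw [hmon β τ (fun _ _ => rfl), hQ, rpow_sq_helper (norm_nonneg _)]
    ring
  rw [hfun]
  refine hprod.congr_deriv ?_
  have e1 : mon (β + Pi.single i 1) (w - t • e) = (w i - t) ^ (β i + 1) * P := by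
    rw [hmon (β + Pi.single i 1) t (fun j hj => by simp [Pi.single_eq_of_ne hj])]
    simp
  have e2 : mon (β - Pi.single i 1) (w - t • e) = (w i - t) ^ (β i - 1) * P := by
    rw [hmon (β - Pi.single i 1) t (fun j hj => by simp [Pi.single_eq_of_ne hj])]
    simp
  have e3 : ‖w - t • e‖ ^ (-(c+2)) = (Q t)^(-c/2 - 1) := by
    rw [hQ, show -c/2 - 1 = -(c+2)/2 by ring, rpow_sq_helper (norm_nonneg _)]
  have e4 : ‖w - t • e‖ ^ (-c) = (Q t)^(-c/2) := by
    rw [hQ, rpow_sq_helper (norm_nonneg _)]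
  rw [e1, e2, e3, e4]
  ring

lemma sum_add_single (β : Fin n → ℕ) (i : Fin n) :
    ∑ j, (β + Pi.single i 1 : Fin n → ℕ) j = (∑ j, β j) + 1 := by
  simp only [Pi.add_apply, Finset.sum_add_distrib]
  congr 1
  simp [Finset.sum_pi_single']

lemma sum_sub_single_le (β : Fin n → ℕ) (i : Fin n) :
    ∑ j, (β - Pi.single i 1 : Fin n → ℕ) j ≤ ∑ j, β j :=
  Finset.sum_le_sum fun j _ => tsub_le_self

lemma hasDerivAt_KK {ε : ℝ} (φ : Eu n → ℝ) {C : ℝ} (hC : ∀ y, |φ y| ≤ C) (hC0 : 0 ≤ C)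
    (hcont : Continuous φ) (hvan : ∀ y : Eu n, ‖y‖ ≤ ε → φ y = 0) (hε : 0 < ε)
    {x : Eu n} (hx : ‖x‖ < ε) (β : Fin n → ℕ) {c : ℝ} (hc : (∑ i, β i : ℝ) + n < c)
    (i : Fin n) :
    HasDerivAt (fun t : ℝ => KK φ β c (x + t • EuclideanSpace.single i (1:ℝ)))
      (c * KK φ (β + Pi.single i 1) (c+2) x - (β i) * KK φ (β - Pi.single i 1) c x) 0 := by
  have hc0 : (0:ℝ) < c := lt_of_le_of_lt (by positivity) hc
  set e : Eu n := EuclideanSpace.single i (1:ℝ) with he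
  set δ : ℝ := (ε - ‖x‖)/2 with hδdef
  have hδ : 0 < δ := by
    rw [hδdef]
    linarith
  set r : ℝ := ‖x‖ + δ with hrdef
  have hr0 : 0 ≤ r := by positivity
  have hrε : r < ε := by
    rw [hrdef, hδdef]
    linarith [norm_nonneg x]
  have hxt : ∀ t ∈ Metric.ball (0:ℝ) δ, ‖x + t • e‖ ≤ r := by
    intro t ht
    rw [Metric.mem_ball, dist_zero_right, Real.norm_eq_abs] at ht
    calc ‖x + t • e‖ ≤ ‖x‖ + ‖t • e‖ := norm_add_le _ _
    _ = ‖x‖ + |t| := by rw [norm_smul, he, EuclideanSpace.norm_single, norm_one, mul_one,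
        Real.norm_eq_abs]
    _ ≤ r := by rw [hrdef]; linarith
  have hxtε : ∀ t ∈ Metric.ball (0:ℝ) δ, ‖x + t • e‖ < ε := fun t ht =>
    lt_of_le_of_lt (hxt t ht) hrε
  set d : ℕ := ∑ j, β j with hd
  have hd1 : ∑ j, (β + Pi.single i 1 : Fin n → ℕ) j = d + 1 := sum_add_single β i
  have hd2 : (∑ j, (β - Pi.single i 1 : Fin n → ℕ) j : ℝ) ≤ (d:ℝ) := by
    exact_mod_cast sum_sub_single_le β i
  have hcd : (d:ℝ) + n < c := by
    rw [hd]
    push_cast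
    exact hc
  set M1 : ℝ := C * (1+r) ^ (∑ j, (β + Pi.single i 1 : Fin n → ℕ) j) * (kap ε r) ^ (-(c+2)) with hM1
  set M2 : ℝ := C * (1+r) ^ (∑ j, (β - Pi.single i 1 : Fin n → ℕ) j) * (kap ε r) ^ (-c) with hM2
  set ρ1 : ℝ := (∑ j, (β + Pi.single i 1 : Fin n → ℕ) j : ℝ) - (c+2) with hρ1
  set ρ2 : ℝ := (∑ j, (β - Pi.single i 1 : Fin n → ℕ) j : ℝ) - c with hρ2
  have hρ1n : ρ1 < -(n:ℝ) := by
    rw [hρ1, ← Nat.cast_sum, hd1]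
    push_cast
    linarith [hcd]
  have hρ2n : ρ2 < -(n:ℝ) := by
    rw [hρ2]
    linarith [hcd, hd2]
  set F : ℝ → Eu n → ℝ := fun t y => itg φ β c (x + t • e) y with hF
  set F' : ℝ → Eu n → ℝ := fun t y =>
    c * itg φ (β + Pi.single i 1) (c+2) (x + t • e) y
    - (β i) * itg φ (β - Pi.single i 1) c (x + t • e) y with hF'
  set bound : Eu n → ℝ := fun y =>
    (c * M1) * (1+‖y‖) ^ ρ1 + ((β i : ℝ) * M2) * (1+‖y‖) ^ ρ2 with hbound
  have hx0 : x + (0:ℝ) • e = x := by simp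
  have key := hasDerivAt_integral_of_dominated_loc_of_deriv_le (μ := volume) (F := F)
    (F' := F') (x₀ := (0:ℝ)) (bound := bound) (Metric.ball_mem_nhds (0:ℝ) hδ)
    ?_ ?_ ?_ ?_ ?_ ?_
  · obtain ⟨hint, hderiv⟩ := key
    have hval : ∫ y : Eu n, F' 0 y =
        c * KK φ (β + Pi.single i 1) (c+2) x - (β i) * KK φ (β - Pi.single i 1) c x := by
      have i1 : Integrable (itg φ (β + Pi.single i 1) (c+2) x) := by
        refine itg_integrable φ hC hC0 hcont hvan hε hx _ ?_
        rw [← Nat.cast_sum, hd1]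
        push_cast
        linarith [hcd]
      have i2 : Integrable (itg φ (β - Pi.single i 1) c x) := by
        refine itg_integrable φ hC hC0 hcont hvan hε hx _ ?_
        calc (∑ j, (β - Pi.single i 1 : Fin n → ℕ) j : ℝ) + n ≤ (d:ℝ) + n := by
              linarith [hd2]
        _ < c := hcd
      simp only [hF', hx0]
      rw [integral_sub (i1.const_mul c) (i2.const_mul _), integral_const_mul,
        integral_const_mul]
      rfl
    rw [hval] at hderiv
    exact hderiv
  · filter_upwards [Metric.ball_mem_nhds (0:ℝ) hδ] with t ht
    exact (itg_continuous φ hcont hvan (hxtε t ht) β c).aestronglyMeasurable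
  · simp only [hF, hx0]
    exact itg_integrable φ hC hC0 hcont hvan hε hx β hc
  · apply AEStronglyMeasurable.sub
    · apply AEStronglyMeasurable.const_mul
      exact ((itg_continuous φ hcont hvan (by rw [hx0]; exact hx) _ (c+2)).comp
        continuous_id).aestronglyMeasurable
    · apply AEStronglyMeasurable.const_mul
      exact ((itg_continuous φ hcont hvan (by rw [hx0]; exact hx) _ c).comp
        continuous_id).aestronglyMeasurable
  · refine ae_of_all _ fun y => fun t ht => ?_
    have h1 := itg_bound φ hC hC0 hvan hε hr0 hrε (hxt t ht) (β + Pi.single i 1)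
      (c := c+2) (by linarith) y
    have h2 := itg_bound φ hC hC0 hvan hε hr0 hrε (hxt t ht) (β - Pi.single i 1)
      (c := c) (by linarith) y
    rw [Real.norm_eq_abs]
    calc |F' t y| ≤ c * |itg φ (β + Pi.single i 1) (c+2) (x + t • e) y|
        + (β i) * |itg φ (β - Pi.single i 1) c (x + t • e) y| := by
          rw [hF']
          refine le_trans (abs_sub _ _) ?_
          rw [abs_mul, abs_mul, abs_of_nonneg hc0.le, Nat.abs_cast]
    _ ≤ bound y := by
          simp only [hbound]
          have b1 : c * |itg φ (β + Pi.single i 1) (c+2) (x + t • e) y| ≤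
              (c * M1) * (1+‖y‖) ^ ρ1 := by
            rw [mul_assoc]
            exact mul_le_mul_of_nonneg_left h1 hc0.le
          have b2 : (β i : ℝ) * |itg φ (β - Pi.single i 1) c (x + t • e) y| ≤
              ((β i : ℝ) * M2) * (1+‖y‖) ^ ρ2 := by
            rw [mul_assoc]
            exact mul_le_mul_of_nonneg_left h2 (Nat.cast_nonneg _)
          linarith
  · exact (bound_integrable hρ1n).add (bound_integrable hρ2n)
  · refine ae_of_all _ fun y => fun t ht => ?_
    by_cases hy : ‖y‖ ≤ ε
    · have hφ : φ y = 0 := hvan y hy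
      have hzF : (F · y) = fun _ => (0:ℝ) := by
        funext τ
        simp [hF, itg, hφ]
      have hzF' : F' t y = 0 := by
        simp [hF', itg, hφ]
      rw [hzF, hzF']
      exact hasDerivAt_const t 0
    · push_neg at hy
      have hne : (y - x) - t • e ≠ 0 := by
        intro h
        have h' : y - (x + t • e) = 0 := by
          rw [← sub_sub]
          exact h
        rw [sub_eq_zero.mp h'] at hy
        exact absurd (hxtε t ht) (not_lt.mpr hy.le)
      have hpt := hasDerivAt_pointwise β c i (y - x) hne
      have hpt2 := hpt.const_mul (φ y)
      have hfe : (F · y) = fun τ : ℝ => φ y * (mon β ((y - x) - τ • e) *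
          ‖(y - x) - τ • e‖ ^ (-c)) := by
        funext τ
        simp only [hF, itg, sub_add_eq_sub_sub]
        ring
      rw [hfe]
      refine hpt2.congr_deriv ?_
      simp only [hF', itg, sub_add_eq_sub_sub]
      ring

lemma itg_two_sum {ε : ℝ} (φ : Eu n → ℝ) (hvan : ∀ y : Eu n, ‖y‖ ≤ ε → φ y = 0)
    {x : Eu n} (hx : ‖x‖ < ε) (c : ℝ) (y : Eu n) :
    ∑ i : Fin n, itg φ (Pi.single i 1 + Pi.single i 1) (c+2) x y
      = itg φ (0 : Fin n → ℕ) c x y := by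
  have hmon0 : mon (0 : Fin n → ℕ) (y - x) = 1 := by simp [mon]
  by_cases hyx : y = x
  · have hφ : φ y = 0 := by
      rw [hyx]
      exact hvan x hx.le
    simp [itg, hφ]
  · have hz : (0:ℝ) < ‖y - x‖ := by
      rw [norm_pos_iff]
      exact sub_ne_zero.mpr hyx
    have hmon2 : ∀ i : Fin n, mon (Pi.single i 1 + Pi.single i 1 : Fin n → ℕ) (y - x)
        = ((y - x) i)^2 := by
      intro i
      rw [mon, Finset.prod_eq_single i]
      · simp
      · intro j _ hj
        simp [Pi.single_eq_of_ne hj]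
      · intro h
        exact absurd (Finset.mem_univ i) h
    have hpow : ‖y - x‖^2 * ‖y - x‖^(-(c+2)) = ‖y - x‖^(-c) := by
      rw [← Real.rpow_natCast ‖y - x‖ 2, ← Real.rpow_add hz]
      congr 1
      push_cast
      ring
    calc ∑ i : Fin n, itg φ (Pi.single i 1 + Pi.single i 1) (c+2) x y
        = ∑ i : Fin n, φ y * (((y - x) i)^2 * ‖y - x‖^(-(c+2))) := by
          refine Finset.sum_congr rfl fun i _ => ?_
          rw [itg, hmon2 i]
          ring
    _ = φ y * ((∑ i : Fin n, ((y - x) i)^2) * ‖y - x‖^(-(c+2))) := by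
          rw [← Finset.mul_sum, ← Finset.sum_mul]
    _ = φ y * (‖y - x‖^2 * ‖y - x‖^(-(c+2))) := by rw [← norm_sq_eq]
    _ = itg φ (0 : Fin n → ℕ) c x y := by
          rw [hpow, itg, hmon0]
          ring

lemma main_induction (s ε : ℝ) (hs : 0 < s) (hε : 0 < ε) (φ : Eu n → ℝ)
    {C : ℝ} (hC : ∀ y, |φ y| ≤ C) (hC0 : 0 ≤ C)
    (hcont : Continuous φ)
    (hvan : ∀ y : Eu n, ‖y‖ ≤ ε → φ y = 0)
    (hker : ∀ x : Eu n, ‖x‖ < ε →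
      ∫ y : Eu n, φ y * ‖y - x‖ ^ (-((n : ℝ) + 2 * s)) = 0) :
    ∀ (k : ℕ) (β : Fin n → ℕ), (∑ i, β i) ≤ k → ∀ x : Eu n, ‖x‖ < ε →
      KK φ β ((n:ℝ) + 2*s + 2*k) x = 0 := by
  intro k
  induction k with
  | zero =>
    intro β hβ x hx
    have hβ0 : β = 0 := by
      funext i
      have := Finset.sum_eq_zero_iff.mp (Nat.le_zero.mp hβ) i (Finset.mem_univ i)
      simpa using this
    subst hβ0
    have h := hker x hx
    rw [KK]
    have : ∀ y : Eu n, itg φ (0 : Fin n → ℕ) ((n:ℝ) + 2*s + 2*(0:ℕ)) x y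
        = φ y * ‖y - x‖ ^ (-((n : ℝ) + 2 * s)) := by
      intro y
      rw [itg]
      simp [mon]
    rw [integral_congr_ae (ae_of_all _ this)]
    exact h
  | succ k ih =>
    have H1 : ∀ (β : Fin n → ℕ) (i : Fin n), (∑ j, β j) ≤ k → ∀ x : Eu n, ‖x‖ < ε →
        KK φ (β + Pi.single i 1) ((n:ℝ) + 2*s + 2*k + 2) x = 0 := by
      intro β i hβ x hx
      set c : ℝ := (n:ℝ) + 2*s + 2*k with hcdef
      have hβR : (∑ j, β j : ℝ) ≤ (k:ℝ) := by exact_mod_cast hβ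
      have hc : (∑ j, β j : ℝ) + n < c := by
        rw [hcdef]
        push_cast
        push_cast at hβR
        linarith
      have hc0 : (0:ℝ) < c := by
        rw [hcdef]
        positivity
      have hder := hasDerivAt_KK φ hC hC0 hcont hvan hε hx β hc i
      have hδ : (0:ℝ) < ε - ‖x‖ := by linarith
      have hzero : (fun t : ℝ => KK φ β c (x + t • EuclideanSpace.single i (1:ℝ)))
          =ᶠ[nhds 0] (fun _ => (0:ℝ)) := by
        filter_upwards [Metric.ball_mem_nhds (0:ℝ) hδ] with t ht
        refine ih β hβ _ ?_
        rw [Metric.mem_ball, dist_zero_right, Real.norm_eq_abs] at ht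
        calc ‖x + t • EuclideanSpace.single i (1:ℝ)‖
            ≤ ‖x‖ + ‖t • EuclideanSpace.single i (1:ℝ)‖ := norm_add_le _ _
        _ = ‖x‖ + |t| := by
              rw [norm_smul, EuclideanSpace.norm_single, norm_one, mul_one, Real.norm_eq_abs]
        _ < ε := by linarith
      have hder0 : HasDerivAt
          (fun t : ℝ => KK φ β c (x + t • EuclideanSpace.single i (1:ℝ))) 0 0 :=
        (hasDerivAt_const (0:ℝ) (0:ℝ)).congr_of_eventuallyEq hzero
      have huniq := hder.unique hder0
      have hKm : KK φ (β - Pi.single i 1) c x = 0 :=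
        ih (β - Pi.single i 1) (le_trans (sum_sub_single_le β i) hβ) x hx
      rw [hKm, mul_zero, sub_zero] at huniq
      have hK2 : KK φ (β + Pi.single i 1) (c+2) x = 0 :=
        (mul_eq_zero.mp huniq).resolve_left hc0.ne'
      have hexp : (n:ℝ) + 2*s + 2*k + 2 = c + 2 := by rw [hcdef]
      rw [hexp]
      exact hK2
    have H2 : ∀ x : Eu n, ‖x‖ < ε → KK φ (0 : Fin n → ℕ) ((n:ℝ) + 2*s + 2*k + 2) x = 0 := by
      intro x hx
      set c' : ℝ := (n:ℝ) + 2*s + 2*k + 2 with hc'def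
      have hc'0 : (0:ℝ) < c' := by
        rw [hc'def]
        positivity
      have hrel : ∀ i : Fin n,
          c' * KK φ (Pi.single i 1 + Pi.single i 1) (c'+2) x = KK φ (0 : Fin n → ℕ) c' x := by
        intro i
        have hsum1 : (∑ j, (Pi.single i 1 : Fin n → ℕ) j) = 1 := by
          simp [Finset.sum_pi_single']
        have hc : (∑ j, (Pi.single i 1 : Fin n → ℕ) j : ℝ) + n < c' := by
          rw [← Nat.cast_sum, hsum1, hc'def]
          push_cast
          linarith [hs, (Nat.cast_nonneg k : (0:ℝ) ≤ (k:ℝ))]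
        have hder := hasDerivAt_KK φ hC hC0 hcont hvan hε hx (Pi.single i 1) hc i
        have hδ : (0:ℝ) < ε - ‖x‖ := by linarith
        have hzero : (fun t : ℝ => KK φ (Pi.single i 1) c'
            (x + t • EuclideanSpace.single i (1:ℝ))) =ᶠ[nhds 0] (fun _ => (0:ℝ)) := by
          filter_upwards [Metric.ball_mem_nhds (0:ℝ) hδ] with t ht
          rw [Metric.mem_ball, dist_zero_right, Real.norm_eq_abs] at ht
          have hxt : ‖x + t • EuclideanSpace.single i (1:ℝ)‖ < ε := by
            calc ‖x + t • EuclideanSpace.single i (1:ℝ)‖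
                ≤ ‖x‖ + ‖t • EuclideanSpace.single i (1:ℝ)‖ := norm_add_le _ _
            _ = ‖x‖ + |t| := by
                  rw [norm_smul, EuclideanSpace.norm_single, norm_one, mul_one,
                    Real.norm_eq_abs]
            _ < ε := by linarith
          have := H1 0 i (by simp) _ hxt
          rw [zero_add] at this
          exact this
        have hder0 : HasDerivAt (fun t : ℝ => KK φ (Pi.single i 1) c'
            (x + t • EuclideanSpace.single i (1:ℝ))) 0 0 :=
          (hasDerivAt_const (0:ℝ) (0:ℝ)).congr_of_eventuallyEq hzero
        have huniq := hder.unique hder0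
        have hss : (Pi.single i 1 - Pi.single i 1 : Fin n → ℕ) = 0 := by
          funext j
          simp
        rw [Pi.single_eq_same, hss] at huniq
        have : (0:ℝ) = c' * KK φ (Pi.single i 1 + Pi.single i 1) (c'+2) x
            - 1 * KK φ (0 : Fin n → ℕ) c' x := by
          exact_mod_cast huniq.symm
        linarith [this]
      have hintsum : ∑ i : Fin n, KK φ (Pi.single i 1 + Pi.single i 1) (c'+2) x
          = KK φ (0 : Fin n → ℕ) c' x := by
        have hint : ∀ i : Fin n, Integrable (itg φ (Pi.single i 1 + Pi.single i 1) (c'+2) x) := by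
          intro i
          refine itg_integrable φ hC hC0 hcont hvan hε hx _ ?_
          have : (∑ j, (Pi.single i 1 + Pi.single i 1 : Fin n → ℕ) j) = 2 := by
            simp [Finset.sum_add_distrib, Finset.sum_pi_single']
          rw [← Nat.cast_sum, this, hc'def]
          push_cast
          linarith [hs, (Nat.cast_nonneg k : (0:ℝ) ≤ (k:ℝ))]
        calc ∑ i : Fin n, KK φ (Pi.single i 1 + Pi.single i 1) (c'+2) x
            = ∫ y : Eu n, ∑ i : Fin n, itg φ (Pi.single i 1 + Pi.single i 1) (c'+2) x y := by
              rw [integral_finset_sum Finset.univ (fun i _ => hint i)]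
              rfl
        _ = ∫ y : Eu n, itg φ (0 : Fin n → ℕ) c' x y :=
              integral_congr_ae (ae_of_all _ (itg_two_sum φ hvan hx c'))
        _ = KK φ (0 : Fin n → ℕ) c' x := rfl
      have hfin : (c' - n) * KK φ (0 : Fin n → ℕ) c' x = 0 := by
        have h1 : c' * (∑ i : Fin n, KK φ (Pi.single i 1 + Pi.single i 1) (c'+2) x)
            = (n:ℝ) * KK φ (0 : Fin n → ℕ) c' x := by
          rw [Finset.mul_sum]
          rw [Finset.sum_congr rfl (fun i _ => hrel i)]
          rw [Finset.sum_const, Finset.card_univ, Fintype.card_fin, nsmul_eq_mul]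
        rw [hintsum] at h1
        rw [sub_mul]
        rw [h1]
        ring
      have hc'n : c' - (n:ℝ) ≠ 0 := by
        rw [hc'def]
        have : c' - (n:ℝ) = 2*s + 2*k + 2 := by rw [hc'def]; ring
        rw [← hc'def, this]
        positivity
      exact (mul_eq_zero.mp hfin).resolve_left hc'n
    intro γ hγ x hx
    have hexp : (n:ℝ) + 2*s + 2*(k+1 : ℕ) = (n:ℝ) + 2*s + 2*k + 2 := by
      push_cast
      ring
    rw [hexp]
    by_cases hγ0 : γ = 0
    · rw [hγ0]
      exact H2 x hx
    · have hex : ∃ i, γ i ≠ 0 := by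
        by_contra h
        push_neg at h
        exact hγ0 (funext fun i => h i)
      obtain ⟨i, hi⟩ := hex
      have hγeq : γ = (γ - Pi.single i 1) + Pi.single i 1 := by
        funext j
        by_cases hj : j = i
        · subst hj
          simp only [Pi.add_apply, Pi.sub_apply, Pi.single_eq_same]
          omega
        · simp only [Pi.add_apply, Pi.sub_apply, Pi.single_eq_of_ne hj]
          omega
      have hsum : ∑ j, γ j = (∑ j, (γ - Pi.single i 1 : Fin n → ℕ) j) + 1 := by
        conv_lhs => rw [hγeq]
        exact sum_add_single _ i
      have hle : (∑ j, (γ - Pi.single i 1 : Fin n → ℕ) j) ≤ k := by omega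
      rw [hγeq]
      exact H1 (γ - Pi.single i 1) i hle x hx

end UCPStep

open UCPStep in
/-- If a continuous function `φ` vanishing at infinity vanishes on the closed ball of
radius `ε` and annihilates all translated Riesz kernels `y ↦ |y - x|^{-(n+2s)}`, `|x| < ε`,
then it also annihilates all the functions `y ↦ y^β · |y|^{-(2m+n+2s)}` with `|β| ≤ m`.
This is the inductive step in the proof of unique continuation for `(-Δ)^s`, `n > 1`. -/
theorem fractional_laplacian_ucp_inductive_step
    (n : ℕ) (hn : 1 ≤ n) (s : ℝ) (hs : s ∈ Set.Ioo (0 : ℝ) 1)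
    (ε : ℝ) (hε : 0 < ε)
    (φ : EuclideanSpace ℝ (Fin n) → ℝ)
    (hcont : Continuous φ)
    (hinf : Tendsto φ (cocompact (EuclideanSpace ℝ (Fin n))) (nhds 0))
    (hvan : ∀ y : EuclideanSpace ℝ (Fin n), ‖y‖ ≤ ε → φ y = 0)
    (hker : ∀ x : EuclideanSpace ℝ (Fin n), ‖x‖ < ε →
      ∫ y : EuclideanSpace ℝ (Fin n), φ y * ‖y - x‖ ^ (-((n : ℝ) + 2 * s)) = 0) :
    ∀ (m : ℕ) (β : Fin n → ℕ), (∑ i, β i) ≤ m →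
      ∫ y : EuclideanSpace ℝ (Fin n),
        φ y * (∏ i, (y i) ^ (β i)) * ‖y‖ ^ (-(2 * (m : ℝ) + n + 2 * s)) = 0 := by
  intro m β hβ
  obtain ⟨C, hC0, hC⟩ := UCPStep.phi_bound φ hcont hinf
  have main := UCPStep.main_induction s ε hs.1 hε φ hC hC0 hcont hvan hker m β hβ 0
    (by simpa using hε)
  rw [UCPStep.KK] at main
  have hexp : -(2*(m:ℝ) + n + 2*s) = -((n:ℝ) + 2*s + 2*m) := by ring
  calc ∫ y : EuclideanSpace ℝ (Fin n),
        φ y * (∏ i, (y i) ^ (β i)) * ‖y‖ ^ (-(2*(m:ℝ) + n + 2*s))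
      = ∫ y : EuclideanSpace ℝ (Fin n), UCPStep.itg φ β ((n:ℝ) + 2*s + 2*m) 0 y := by
        refine integral_congr_ae (ae_of_all _ fun y => ?_)
        simp only [UCPStep.itg, UCPStep.mon, sub_zero]
        rw [hexp]
  _ = 0 := main
end

section
/- Let ε > 0 and let K = {y ∈ ℝ : |y| ≥ ε}. For every continuous function f : K → ℝ vanishing at infinity and every δ > 0, there exist N ∈ ℕ and real coefficients c₁, …, c_N such that sup_{y ∈ K} | f(y) − Σ_{k=1}^N c_k · sgn(y)^k · |y|^{-k} | < δ. In other words, the linear span of the functions y ↦ sgn(y)^k·|y|^{-k}, k ≥ 1, is dense in the uniform norm in the space of continuous functions on {|y| ≥ ε} vanishing at infinity. -/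
open Polynomial Topology Filter

/-- The linear span of the functions `y ↦ sgn(y)^k · |y|^{-k}`, `k ≥ 1`, is uniformly dense
in the space of continuous functions on `K = {|y| ≥ ε}` vanishing at infinity. -/
theorem span_sign_inv_powers_dense
    (ε : ℝ) (hε : 0 < ε)
    (f : ℝ → ℝ)
    (hcont : ContinuousOn f {y : ℝ | ε ≤ |y|})
    (hinf : ∀ δ : ℝ, 0 < δ → IsCompact {y : ℝ | ε ≤ |y| ∧ δ ≤ |f y|})
    (δ : ℝ) (hδ : 0 < δ) :
    ∃ (N : ℕ) (c : ℕ → ℝ), ∀ y : ℝ, ε ≤ |y| →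
      |f y - ∑ k ∈ Finset.Icc 1 N, c k * (Real.sign y) ^ k * |y| ^ (-(k : ℤ))| < δ := by
  set g : ℝ → ℝ := fun x => if x = 0 then 0 else f x⁻¹ with hg
  have hmem : ∀ x : ℝ, x ∈ Set.Icc (-ε⁻¹) ε⁻¹ → x ≠ 0 → ε ≤ |x⁻¹| := by
    intro x hx hx0
    rw [abs_inv, le_inv_comm₀ hε (abs_pos.mpr hx0)]
    exact abs_le.mpr ⟨hx.1, hx.2⟩
  -- continuity of g on [-ε⁻¹, ε⁻¹]
  have hgc : ContinuousOn g (Set.Icc (-ε⁻¹) ε⁻¹) := by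
    intro x hx
    rcases eq_or_ne x 0 with rfl | hx0
    · -- continuity at 0
      rw [ContinuousWithinAt, hg]
      simp only [if_pos rfl]
      rw [Metric.tendsto_nhdsWithin_nhds]
      intro δ' hδ'
      obtain ⟨M, hM⟩ := (hinf (δ'/2) (by linarith)).isBounded.subset_closedBall 0
      refine ⟨(|M| + 1)⁻¹, by positivity, ?_⟩
      intro z hz hzd
      rcases eq_or_ne z 0 with rfl | hz0
      · simpa using hδ'
      · simp only [if_neg hz0, Real.dist_eq, sub_zero] at hzd ⊢
        have h1 : z⁻¹ ∉ {y : ℝ | ε ≤ |y| ∧ δ'/2 ≤ |f y|} := by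
          intro hmem2
          have h3 := hM hmem2
          simp only [Metric.mem_closedBall, Real.dist_eq, sub_zero] at h3
          have h2 : |M| + 1 ≤ |z⁻¹| := by
            rw [abs_inv, ← inv_inv (|M| + 1)]
            exact inv_anti₀ (abs_pos.mpr hz0) hzd.le
          have : |z⁻¹| ≤ |M| := h3.trans (le_abs_self M)
          linarith
        simp only [Set.mem_setOf_eq, not_and, not_le] at h1
        have := h1 (hmem z hz hz0)
        simp only [if_true, sub_zero]
        linarith
    · -- continuity at x ≠ 0
      have hS : 𝓝[Set.Icc (-ε⁻¹) ε⁻¹] x = 𝓝[Set.Icc (-ε⁻¹) ε⁻¹ \ {0}] x := by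
        apply nhdsWithin_eq_nhdsWithin' (s := {z : ℝ | z ≠ 0})
        · exact isOpen_ne.mem_nhds hx0
        · ext z; simp only [Set.mem_inter_iff, Set.mem_diff, Set.mem_singleton_iff,
            Set.mem_setOf_eq]; tauto
      rw [ContinuousWithinAt, hS]
      have hcomp : ContinuousWithinAt (fun z => f z⁻¹)
          (Set.Icc (-ε⁻¹) ε⁻¹ \ {0}) x := by
        apply ContinuousWithinAt.comp (t := {y : ℝ | ε ≤ |y|})
        · exact hcont _ (hmem x hx hx0)
        · exact (continuousAt_inv₀ hx0).continuousWithinAt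
        · intro z hz
          exact hmem z hz.1 hz.2
      have heq : ∀ z ∈ Set.Icc (-ε⁻¹) ε⁻¹ \ {0}, g z = f z⁻¹ := fun z hz =>
        if_neg (fun h => hz.2 (by simp [h]))
      exact hcomp.congr heq (if_neg hx0)
  -- Weierstrass approximation
  obtain ⟨p, hp⟩ := exists_polynomial_near_of_continuousOn (-ε⁻¹) ε⁻¹ g hgc (δ/2)
    (by linarith)
  have h0mem : (0:ℝ) ∈ Set.Icc (-ε⁻¹) ε⁻¹ := by
    constructor <;> [linarith [inv_pos.mpr hε]; positivity]
  have hc0 : |p.coeff 0| < δ/2 := by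
    have := hp 0 h0mem
    simpa [hg, Polynomial.eval_zero, Polynomial.coeff_zero_eq_eval_zero] using this
  refine ⟨p.natDegree, fun k => p.coeff k, ?_⟩
  intro y hy
  have hy0 : y ≠ 0 := fun h => by simp [h] at hy; linarith
  have hyinv : y⁻¹ ∈ Set.Icc (-ε⁻¹) ε⁻¹ := by
    have h1 : |y⁻¹| ≤ ε⁻¹ := by
      rw [abs_inv]
      exact inv_anti₀ hε hy
    exact abs_le.mp h1
  have hsum : ∑ k ∈ Finset.Icc 1 p.natDegree,
      p.coeff k * (Real.sign y) ^ k * |y| ^ (-(k : ℤ)) = p.eval y⁻¹ - p.coeff 0 := by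
    have hterm : ∀ k : ℕ, (Real.sign y) ^ k * |y| ^ (-(k : ℤ)) = (y⁻¹) ^ k := by
      intro k
      rw [zpow_neg, zpow_natCast, ← inv_pow, ← mul_pow]
      congr 1
      rcases lt_or_gt_of_ne hy0 with h | h
      · rw [Real.sign_of_neg h, abs_of_neg h]
        field_simp
      · rw [Real.sign_of_pos h, abs_of_pos h]
        field_simp
    have hrange : Finset.range (p.natDegree + 1) = insert 0 (Finset.Icc 1 p.natDegree) := by
      ext k
      simp only [Finset.mem_range, Finset.mem_insert, Finset.mem_Icc]
      omega
    have heval : p.eval y⁻¹ = ∑ k ∈ Finset.range (p.natDegree + 1), p.coeff k * (y⁻¹) ^ k :=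
      eval_eq_sum_range y⁻¹
    rw [heval, hrange, Finset.sum_insert (by simp)]
    simp only [pow_zero, mul_one]
    rw [add_sub_cancel_left]
    apply Finset.sum_congr rfl
    intro k _
    rw [mul_assoc, hterm k]
  rw [hsum]
  have hfy : f y = g y⁻¹ := by
    simp [hg, inv_ne_zero hy0, inv_inv]
  have hp2 := hp y⁻¹ hyinv
  rw [hfy]
  calc |g y⁻¹ - (p.eval y⁻¹ - p.coeff 0)|
      = |(g y⁻¹ - p.eval y⁻¹) + p.coeff 0| := by ring_nf
    _ ≤ |g y⁻¹ - p.eval y⁻¹| + |p.coeff 0| := abs_add_le _ _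
    _ < δ/2 + δ/2 := by rw [abs_sub_comm]; exact add_lt_add hp2 hc0
    _ = δ := by ring
end

section
/- Let ν be a Lévy measure on ℝⁿ, and suppose there exist x₀ ∈ ℝⁿ and δ > 0 with |x₀| ≥ δ such that ν(B_δ(x₀)) = 0. Then there exists a smooth compactly supported function φ : ℝⁿ → ℝ with φ ≠ 0, supp φ ⊆ B_{δ/2}(x₀) (in particular φ = 0 on B_{δ/2}(0)), such that ∫_{ℝⁿ} φ(x+y) ν(dy) = 0 for every x with |x| < δ/2. Consequently, the Lévy operator with Lévy measure ν fails the unique continuation principle on the ball B_{δ/2}(0). -/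
open MeasureTheory Metric

/-- If the Lévy measure `ν` has a "hole" `B_δ(x₀)` in its support (with `|x₀| ≥ δ`), then
there is a nonzero smooth compactly supported `φ` with support in `B_{δ/2}(x₀)` (in particular
`φ = 0` on `B_{δ/2}(0)`) such that `∫ φ(x+y) ν(dy) = 0` for all `|x| < δ/2`: the Lévy operator
with Lévy measure `ν` fails the unique continuation principle on `B_{δ/2}(0)`. -/
theorem levy_hole_ucp_fails
    (n : ℕ) (ν : Measure (EuclideanSpace ℝ (Fin n)))
    (hν0 : ν {0} = 0)
    (hνint : ∫⁻ y : EuclideanSpace ℝ (Fin n), ENNReal.ofReal (min 1 (‖y‖ ^ 2)) ∂ν < ⊤)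
    (x₀ : EuclideanSpace ℝ (Fin n)) (δ : ℝ) (hδ : 0 < δ) (hx₀ : δ ≤ ‖x₀‖)
    (hhole : ν (ball x₀ δ) = 0) :
    ∃ φ : EuclideanSpace ℝ (Fin n) → ℝ,
      ContDiff ℝ (⊤ : ℕ∞) φ ∧ HasCompactSupport φ ∧ φ ≠ 0 ∧
      tsupport φ ⊆ ball x₀ (δ / 2) ∧
      (∀ z ∈ ball (0 : EuclideanSpace ℝ (Fin n)) (δ / 2), φ z = 0) ∧
      ∀ x : EuclideanSpace ℝ (Fin n), ‖x‖ < δ / 2 → ∫ y, φ (x + y) ∂ν = 0 := by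
  have h4 : (0:ℝ) < δ / 4 := by linarith
  have h43 : δ / 4 < δ / 3 := by linarith
  let f : ContDiffBump x₀ := ⟨δ / 4, δ / 3, h4, h43⟩
  have hts : tsupport (⇑f) = closedBall x₀ (δ / 3) := f.tsupport_eq
  have htsub : tsupport (⇑f) ⊆ ball x₀ (δ / 2) := by
    rw [hts]
    exact closedBall_subset_ball (by linarith)
  refine ⟨f, f.contDiff, f.hasCompactSupport, ?_, htsub, ?_, ?_⟩
  · intro h
    have h1 : f x₀ = 1 := f.one_of_mem_closedBall (mem_closedBall_self (le_of_lt h4))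
    rw [show (⇑f) x₀ = (0 : EuclideanSpace ℝ (Fin n) → ℝ) x₀ from congrFun h x₀] at h1
    simpa using h1
  · intro z hz
    by_contra hzne
    have hzs : z ∈ tsupport (⇑f) := subset_tsupport _ hzne
    have := htsub hzs
    rw [mem_ball] at this hz
    have : ‖x₀‖ < δ := by
      calc ‖x₀‖ ≤ ‖x₀ - z‖ + ‖z‖ := by
            simpa using norm_add_le (x₀ - z) z
        _ < δ / 2 + δ / 2 := by
            rw [dist_comm, dist_eq_norm] at this
            rw [dist_zero_right] at hz
            linarith
        _ = δ := by ring
    linarith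
  · intro x hx
    have hae : ∀ᵐ y ∂ν, f (x + y) = 0 := by
      have hsub : {y : EuclideanSpace ℝ (Fin n) | f (x + y) ≠ 0} ⊆ ball x₀ δ := by
        intro y hy
        have : x + y ∈ tsupport (⇑f) := subset_tsupport _ hy
        have hmem : x + y ∈ ball x₀ (δ / 2) := htsub this
        rw [mem_ball, dist_eq_norm] at hmem ⊢
        calc ‖y - x₀‖ = ‖(x + y - x₀) - x‖ := by congr 1; abel
          _ ≤ ‖x + y - x₀‖ + ‖x‖ := norm_sub_le _ _
          _ < δ / 2 + δ / 2 := add_lt_add hmem hx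
          _ = δ := by ring
      have : ν {y | f (x + y) ≠ 0} = 0 := measure_mono_null hsub hhole
      exact this
    exact integral_eq_zero_of_ae hae
end

section
/- Let ν be a Lévy measure on ℝⁿ, and suppose there exist x₀ ∈ ℝⁿ and δ > 0 with |x₀| ≥ δ such that the restriction of ν to B_δ(x₀) equals the restriction of Lebesgue measure to B_δ(x₀). Then there exists a smooth compactly supported function φ : ℝⁿ → ℝ with φ ≠ 0, supp φ ⊆ B_{δ/2}(x₀) (in particular φ = 0 on B_{δ/2}(0)), such that ∫_{ℝⁿ} φ(x+y) ν(dy) = 0 for every x with |x| < δ/2. Hence full topological support of the Lévy measure is not sufficient for the unique continuation principle: the Lévy operator with Lévy measure ν fails the UCP. -/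
open MeasureTheory Metric

/-- If the Lévy measure `ν` coincides with Lebesgue measure on some ball `B_δ(x₀)` with
`|x₀| ≥ δ`, then there is a nonzero smooth compactly supported `φ` with support in
`B_{δ/2}(x₀)` (in particular `φ = 0` on `B_{δ/2}(0)`) such that `∫ φ(x+y) ν(dy) = 0` for all
`|x| < δ/2`: full topological support of `ν` is not sufficient for the UCP. -/
theorem levy_lebesgue_patch_ucp_fails
    (n : ℕ) (ν : Measure (EuclideanSpace ℝ (Fin n)))
    (hν0 : ν {0} = 0)
    (hνint : ∫⁻ y : EuclideanSpace ℝ (Fin n), ENNReal.ofReal (min 1 (‖y‖ ^ 2)) ∂ν < ⊤)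
    (x₀ : EuclideanSpace ℝ (Fin n)) (δ : ℝ) (hδ : 0 < δ) (hx₀ : δ ≤ ‖x₀‖)
    (hleb : ν.restrict (ball x₀ δ) = volume.restrict (ball x₀ δ)) :
    ∃ φ : EuclideanSpace ℝ (Fin n) → ℝ,
      ContDiff ℝ (⊤ : ℕ∞) φ ∧ HasCompactSupport φ ∧ φ ≠ 0 ∧
      tsupport φ ⊆ ball x₀ (δ / 2) ∧
      (∀ z ∈ ball (0 : EuclideanSpace ℝ (Fin n)) (δ / 2), φ z = 0) ∧
      ∀ x : EuclideanSpace ℝ (Fin n), ‖x‖ < δ / 2 → ∫ y, φ (x + y) ∂ν = 0 := by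
  -- n = 0 is impossible since ‖x₀‖ ≥ δ > 0
  obtain _ | n := n
  · exfalso
    have hx0 : x₀ = 0 := Subsingleton.elim _ _
    rw [hx0, norm_zero] at hx₀
    linarith
  -- a unit vector
  set u : EuclideanSpace ℝ (Fin (n + 1)) := EuclideanSpace.single (0 : Fin (n + 1)) (1 : ℝ)
    with hu
  have hunorm : ‖u‖ = 1 := by
    rw [hu, EuclideanSpace.norm_single, norm_one]
  set a : EuclideanSpace ℝ (Fin (n + 1)) := x₀ with ha
  set b : EuclideanSpace ℝ (Fin (n + 1)) := x₀ + (δ / 4) • u with hb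
  have hab : ‖a - b‖ = δ / 4 := by
    have h1 : a - b = -((δ / 4) • u) := by rw [ha, hb]; abel
    rw [h1, norm_neg, norm_smul, hunorm, mul_one, Real.norm_eq_abs,
      abs_of_pos (by linarith : (0:ℝ) < δ / 4)]
  -- bump function
  obtain ⟨B, hBin, hBout⟩ :
      ∃ B : ContDiffBump (0 : EuclideanSpace ℝ (Fin (n + 1))),
        B.rIn = δ / 32 ∧ B.rOut = δ / 16 :=
    ⟨⟨δ / 32, δ / 16, by linarith, by linarith⟩, rfl, rfl⟩
  set φ : EuclideanSpace ℝ (Fin (n + 1)) → ℝ := fun y => B (y - a) - B (y - b) with hφ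
  have hsupp : Function.support φ ⊆ closedBall a (δ / 16) ∪ closedBall b (δ / 16) := by
    intro y hy
    rw [Function.mem_support] at hy
    by_contra h
    simp only [Set.mem_union, not_or] at h
    obtain ⟨h1, h2⟩ := h
    rw [mem_closedBall, not_le] at h1 h2
    have e1 : B (y - a) = 0 := B.zero_of_le_dist (by
      rw [dist_zero_right, hBout]
      rw [dist_eq_norm] at h1
      exact le_of_lt h1)
    have e2 : B (y - b) = 0 := B.zero_of_le_dist (by
      rw [dist_zero_right, hBout]
      rw [dist_eq_norm] at h2
      exact le_of_lt h2)
    rw [hφ] at hy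
    simp only [e1, e2, sub_zero] at hy
    exact hy rfl
  have hclosed : IsClosed (closedBall a (δ / 16) ∪ closedBall b (δ / 16)) :=
    IsClosed.union isClosed_closedBall isClosed_closedBall
  have htsupp : tsupport φ ⊆ closedBall a (δ / 16) ∪ closedBall b (δ / 16) :=
    closure_minimal hsupp hclosed
  have htsupp_ball : tsupport φ ⊆ ball x₀ (δ / 2) := by
    intro y hy
    rcases htsupp hy with h | h
    · rw [mem_closedBall] at h
      rw [mem_ball]
      calc dist y x₀ = dist y a := by rw [ha]
        _ ≤ δ / 16 := h
        _ < δ / 2 := by linarith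
    · rw [mem_closedBall] at h
      rw [mem_ball]
      have hbx : dist b x₀ = δ / 4 := by
        rw [hb, dist_eq_norm]
        have h2 : x₀ + (δ / 4) • u - x₀ = (δ / 4) • u := by abel
        rw [h2, norm_smul, hunorm, mul_one, Real.norm_eq_abs,
          abs_of_pos (by linarith : (0:ℝ) < δ / 4)]
      calc dist y x₀ ≤ dist y b + dist b x₀ := dist_triangle _ _ _
        _ ≤ δ / 16 + δ / 4 := by rw [hbx]; linarith [h]
        _ < δ / 2 := by linarith
  have hcompact : HasCompactSupport φ :=
    IsCompact.of_isClosed_subset (isCompact_closedBall x₀ (δ / 2)) (isClosed_tsupport φ)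
      (htsupp_ball.trans ball_subset_closedBall)
  have hsmooth : ContDiff ℝ (⊤ : ℕ∞) φ := by
    apply ContDiff.sub
    · exact B.contDiff.comp (contDiff_id.sub contDiff_const)
    · exact B.contDiff.comp (contDiff_id.sub contDiff_const)
  have hne : φ ≠ 0 := by
    intro h0
    have h1 : φ a = 0 := by rw [h0]; rfl
    have h2 : B (a - a) = 1 := by
      rw [sub_self]
      exact B.one_of_mem_closedBall (mem_closedBall_self (by rw [hBin]; linarith))
    have h3 : B (a - b) = 0 := B.zero_of_le_dist (by
      rw [dist_zero_right, hab, hBout]; linarith)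
    rw [hφ] at h1
    simp only [h2, h3, sub_zero] at h1
    exact one_ne_zero h1
  have hzero_ball : ∀ z ∈ ball (0 : EuclideanSpace ℝ (Fin (n + 1))) (δ / 2), φ z = 0 := by
    intro z hz
    apply image_eq_zero_of_notMem_tsupport
    intro hmem
    have h1 := htsupp_ball hmem
    rw [mem_ball] at h1 hz
    rw [dist_zero_right] at hz
    rw [dist_eq_norm] at h1
    have h2 : ‖x₀‖ ≤ ‖z‖ + ‖z - x₀‖ := by
      calc ‖x₀‖ = ‖z - (z - x₀)‖ := by congr 1; abel
        _ ≤ ‖z‖ + ‖z - x₀‖ := norm_sub_le _ _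
    linarith
  -- φ has Lebesgue integral zero
  have hBa : Integrable (fun y => B (y - a)) volume := B.integrable.comp_sub_right a
  have hBb : Integrable (fun y => B (y - b)) volume := B.integrable.comp_sub_right b
  have hint0 : ∫ y, φ y = 0 := by
    rw [hφ]
    rw [integral_sub hBa hBb, integral_sub_right_eq_self (fun y => B y) a,
      integral_sub_right_eq_self (fun y => B y) b, sub_self]
  refine ⟨φ, hsmooth, hcompact, hne, htsupp_ball, hzero_ball, ?_⟩
  intro x hx
  have hvanish : ∀ y ∉ ball x₀ δ, φ (x + y) = 0 := by
    intro y hy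
    apply image_eq_zero_of_notMem_tsupport
    intro hmem
    apply hy
    have h1 := htsupp_ball hmem
    rw [mem_ball, dist_eq_norm] at h1 ⊢
    calc ‖y - x₀‖ = ‖x + y - x₀ - x‖ := by congr 1; abel
      _ ≤ ‖x + y - x₀‖ + ‖x‖ := norm_sub_le _ _
      _ < δ / 2 + δ / 2 := by linarith
      _ = δ := by ring
  calc ∫ y, φ (x + y) ∂ν = ∫ y in ball x₀ δ, φ (x + y) ∂ν :=
        (setIntegral_eq_integral_of_forall_compl_eq_zero hvanish).symm
    _ = ∫ y in ball x₀ δ, φ (x + y) := by rw [hleb]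
    _ = ∫ y, φ (x + y) := setIntegral_eq_integral_of_forall_compl_eq_zero hvanish
    _ = ∫ y, φ y := integral_add_left_eq_self (fun y => φ y) x
    _ = 0 := hint0
end

section
/- Let ν be a Lévy measure on ℝⁿ, and suppose there exist x₀ ∈ ℝⁿ, δ > 0 with |x₀| ≥ δ, and b ∈ ℝⁿ such that the restriction of ν to B_δ(x₀) has density e^{b·y} with respect to Lebesgue measure. Then there exists a smooth compactly supported function φ : ℝⁿ → ℝ with φ ≠ 0, supp φ ⊆ B_{δ/2}(x₀) (in particular φ = 0 on B_{δ/2}(0)), such that ∫_{ℝⁿ} φ(x+y) ν(dy) = 0 for every x with |x| < δ/2. Hence the Lévy operator with Lévy measure ν fails the unique continuation principle. -/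
open MeasureTheory Metric
open scoped ENNReal NNReal

/-- If the Lévy measure `ν` has density `e^{b·y}` w.r.t. Lebesgue measure on some ball
`B_δ(x₀)` with `|x₀| ≥ δ`, then there is a nonzero smooth compactly supported `φ` with
support in `B_{δ/2}(x₀)` (in particular `φ = 0` on `B_{δ/2}(0)`) such that
`∫ φ(x+y) ν(dy) = 0` for all `|x| < δ/2`: the Lévy operator with Lévy measure `ν` fails
the unique continuation principle. -/
theorem levy_exponential_density_ucp_fails
    (n : ℕ) (ν : Measure (EuclideanSpace ℝ (Fin n)))
    (hν0 : ν {0} = 0)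
    (hνint : ∫⁻ y : EuclideanSpace ℝ (Fin n), ENNReal.ofReal (min 1 (‖y‖ ^ 2)) ∂ν < ⊤)
    (x₀ : EuclideanSpace ℝ (Fin n)) (δ : ℝ) (hδ : 0 < δ) (hx₀ : δ ≤ ‖x₀‖)
    (b : EuclideanSpace ℝ (Fin n))
    (hdens : ν.restrict (ball x₀ δ) =
      (volume.withDensity
        (fun y => ENNReal.ofReal (Real.exp (inner ℝ b y : ℝ)))).restrict (ball x₀ δ)) :
    ∃ φ : EuclideanSpace ℝ (Fin n) → ℝ,
      ContDiff ℝ (⊤ : ℕ∞) φ ∧ HasCompactSupport φ ∧ φ ≠ 0 ∧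
      tsupport φ ⊆ ball x₀ (δ / 2) ∧
      (∀ z ∈ ball (0 : EuclideanSpace ℝ (Fin n)) (δ / 2), φ z = 0) ∧
      ∀ x : EuclideanSpace ℝ (Fin n), ‖x‖ < δ / 2 → ∫ y, φ (x + y) ∂ν = 0 := by
  classical
  -- the exponential weight
  set w : EuclideanSpace ℝ (Fin n) → ℝ := fun z => Real.exp (inner ℝ b z : ℝ) with hw
  have hwcont : Continuous w := Real.continuous_exp.comp (continuous_const.inner continuous_id)
  have hwpos : ∀ z : EuclideanSpace ℝ (Fin n), 0 < w z := fun z => Real.exp_pos _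
  -- two bump functions centered at x₀
  let ψ₁ : ContDiffBump x₀ := ⟨δ/16, δ/8, by linarith, by linarith⟩
  let ψ₂ : ContDiffBump x₀ := ⟨δ/4, δ/3, by linarith, by linarith⟩
  set I₁ : ℝ := ∫ z : EuclideanSpace ℝ (Fin n), w z * ψ₁ z with hI₁
  set I₂ : ℝ := ∫ z : EuclideanSpace ℝ (Fin n), w z * ψ₂ z with hI₂
  have hint₁ : Integrable (fun z => w z * ψ₁ z) volume :=
    (hwcont.mul ψ₁.continuous).integrable_of_hasCompactSupport
      (ψ₁.hasCompactSupport.mul_left)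
  have hint₂ : Integrable (fun z => w z * ψ₂ z) volume :=
    (hwcont.mul ψ₂.continuous).integrable_of_hasCompactSupport
      (ψ₂.hasCompactSupport.mul_left)
  have hI₁pos : 0 < I₁ := by
    rw [hI₁, integral_pos_iff_support_of_nonneg
      (fun z => mul_nonneg (hwpos z).le (ψ₁.nonneg)) hint₁]
    have hsub : ball x₀ (δ/16) ⊆ Function.support fun z => w z * ψ₁ z := by
      intro z hz
      have : ψ₁ z = 1 := ψ₁.one_of_mem_closedBall (show dist z x₀ ≤ δ/16 from le_of_lt (mem_ball.1 hz))
      simp [Function.mem_support, this, (hwpos z).ne']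
    calc (0:ℝ≥0∞) < volume (ball x₀ (δ/16)) := by
          simpa using (measure_ball_pos volume x₀ (by linarith : (0:ℝ) < δ/16))
      _ ≤ _ := measure_mono hsub
  set φ : EuclideanSpace ℝ (Fin n) → ℝ := fun z => I₂ * ψ₁ z - I₁ * ψ₂ z with hφ
  -- support facts
  have hsupp : tsupport φ ⊆ closedBall x₀ (δ/3) := by
    apply closure_minimal _ isClosed_closedBall
    intro z hz
    by_contra hzb
    have h1 : ψ₁ z = 0 := by
      apply ψ₁.zero_of_le_dist
      have h : ¬ dist z x₀ ≤ δ/3 := by simpa [mem_closedBall] using hzb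
      show δ/8 ≤ dist z x₀
      linarith [not_le.1 h]
    have h2 : ψ₂ z = 0 := by
      apply ψ₂.zero_of_le_dist
      have h : ¬ dist z x₀ ≤ δ/3 := by simpa [mem_closedBall] using hzb
      show δ/3 ≤ dist z x₀
      linarith [not_le.1 h]
    exact hz (by simp [hφ, h1, h2])
  have hsupp2 : tsupport φ ⊆ ball x₀ (δ/2) :=
    hsupp.trans (closedBall_subset_ball (by linarith))
  have hφc : HasCompactSupport φ :=
    HasCompactSupport.of_support_subset_isCompact (isCompact_closedBall x₀ (δ/3))
      (subset_closure.trans hsupp)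
  have hφsmooth : ContDiff ℝ (⊤ : ℕ∞) φ :=
    (contDiff_const.mul ψ₁.contDiff).sub (contDiff_const.mul ψ₂.contDiff)
  have hφcont : Continuous φ := hφsmooth.continuous
  -- φ ≠ 0
  have hx₀pos : 0 < ‖x₀‖ := lt_of_lt_of_le hδ hx₀
  have hφne : φ ≠ 0 := by
    set p : EuclideanSpace ℝ (Fin n) := (1 + (3*δ/16) / ‖x₀‖) • x₀ with hp
    have hdistp : dist p x₀ = 3*δ/16 := by
      have : p - x₀ = ((3*δ/16) / ‖x₀‖) • x₀ := by
        rw [hp]; module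
      rw [dist_eq_norm, this, norm_smul]
      rw [Real.norm_eq_abs, abs_of_nonneg (by positivity)]
      field_simp
    intro h0
    have h1 : ψ₁ p = 0 := ψ₁.zero_of_le_dist (by rw [hdistp]; show δ/8 ≤ _; linarith)
    have h2 : ψ₂ p = 1 := ψ₂.one_of_mem_closedBall (by show dist p x₀ ≤ δ/4; rw [hdistp]; linarith)
    have := congrFun h0 p
    simp [hφ, h1, h2] at this
    exact absurd this hI₁pos.ne'
  -- key cancellation: ∫ w z * φ z = 0
  have hkey : ∫ z : EuclideanSpace ℝ (Fin n), w z * φ z = 0 := by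
    have : (fun z => w z * φ z)
        = fun z => I₂ * (w z * ψ₁ z) - I₁ * (w z * ψ₂ z) := by
      funext z; simp [hφ]; ring
    rw [this, integral_sub (hint₁.const_mul _) (hint₂.const_mul _),
      integral_const_mul, integral_const_mul, ← hI₁, ← hI₂]
    ring
  refine ⟨φ, hφsmooth, hφc, hφne, hsupp2, ?_, ?_⟩
  · intro z hz
    by_contra hne
    have hz' : z ∈ ball x₀ (δ/2) := hsupp2 (subset_closure (by simpa [Function.mem_support] using hne))
    rw [mem_ball, dist_eq_norm] at hz'
    rw [mem_ball, dist_zero_right] at hz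
    have h1 : ‖x₀‖ ≤ ‖z - x₀‖ + ‖z‖ := by
      calc ‖x₀‖ = ‖z - (z - x₀)‖ := by rw [show z - (z - x₀) = x₀ by abel]
        _ ≤ ‖z‖ + ‖z - x₀‖ := norm_sub_le _ _
        _ = ‖z - x₀‖ + ‖z‖ := by ring
    linarith
  · intro x hx
    -- translated φ vanishes outside ball x₀ δ
    have hvan : ∀ y : EuclideanSpace ℝ (Fin n), y ∉ ball x₀ δ → φ (x + y) = 0 := by
      intro y hy
      by_contra hne
      have : x + y ∈ ball x₀ (δ/2) := hsupp2 (subset_closure (by simpa [Function.mem_support] using hne))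
      rw [mem_ball, dist_eq_norm] at this
      apply hy
      rw [mem_ball, dist_eq_norm]
      calc ‖y - x₀‖ = ‖(x + y - x₀) - x‖ := by rw [show x + y - x₀ - x = y - x₀ by abel]
        _ ≤ ‖x + y - x₀‖ + ‖x‖ := norm_sub_le _ _
        _ < δ/2 + δ/2 := add_lt_add this hx
        _ = δ := by ring
    have step1 : ∫ y, φ (x + y) ∂ν = ∫ y in ball x₀ δ, φ (x + y) ∂ν :=
      (setIntegral_eq_integral_of_forall_compl_eq_zero hvan).symm
    rw [step1, hdens,
      show (fun y : EuclideanSpace ℝ (Fin n) => ENNReal.ofReal (Real.exp (inner ℝ b y : ℝ)))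
        = (fun y : EuclideanSpace ℝ (Fin n) => ((Real.exp (inner ℝ b y : ℝ)).toNNReal : ℝ≥0∞)) from rfl,
      restrict_withDensity measurableSet_ball,
      integral_withDensity_eq_integral_smul
        (f := fun y : EuclideanSpace ℝ (Fin n) => (Real.exp (inner ℝ b y : ℝ)).toNNReal)
        (measurable_real_toNNReal.comp hwcont.measurable)]
    have heq : ∀ y : EuclideanSpace ℝ (Fin n), (Real.exp (inner ℝ b y : ℝ)).toNNReal • φ (x + y) = w y * φ (x + y) := by
      intro y
      rw [NNReal.smul_def, Real.coe_toNNReal _ (Real.exp_pos _).le]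
      rfl
    rw [show (fun y : EuclideanSpace ℝ (Fin n) => (Real.exp (inner ℝ b y : ℝ)).toNNReal • φ (x + y))
        = fun y => w y * φ (x + y) from funext heq]
    rw [setIntegral_eq_integral_of_forall_compl_eq_zero
      (fun y hy => by rw [hvan y hy, mul_zero])]
    have hrw : (fun y : EuclideanSpace ℝ (Fin n) => w y * φ (x + y))
        = fun y => Real.exp (-(inner ℝ b x : ℝ)) * ((fun z => w z * φ z) (x + y)) := by
      funext y
      simp only [hw]
      have hin : (inner ℝ b (x + y) : ℝ) = (inner ℝ b x : ℝ) + (inner ℝ b y : ℝ) :=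
        inner_add_right b x y
      rw [hin, Real.exp_add,
        show Real.exp (-(inner ℝ b x : ℝ)) *
            (Real.exp (inner ℝ b x : ℝ) * Real.exp (inner ℝ b y : ℝ) * φ (x + y))
          = (Real.exp (-(inner ℝ b x : ℝ)) * Real.exp (inner ℝ b x : ℝ))
              * (Real.exp (inner ℝ b y : ℝ) * φ (x + y)) from by ring,
        ← Real.exp_add, neg_add_cancel, Real.exp_zero, one_mul]
    rw [hrw, integral_const_mul,
      integral_add_left_eq_self (μ := volume) (fun z => w z * φ z) x, hkey, mul_zero]
end

section
/- Let β ≥ 0 and let ρ be a measure on (0,∞) with ∫_{(0,∞)} min(t,1) ρ(dt) < ∞. Define the Bernstein function f : (0,∞) → [0,∞) by f(λ) = βλ + ∫_{(0,∞)} (1 − e^{−λt}) ρ(dt), and let α > 0. Then the following are equivalent: (b) ∫_{(1,∞)} e^{αt} ρ(dt) < ∞; (c) there exists a function g : (−α,∞) → ℝ that is infinitely differentiable on (−α,∞), agrees with f on (0,∞), satisfies (−1)^{k+1} g^{(k)}(x) ≥ 0 for every k ≥ 1 and every x ∈ (−α,∞), and has a finite limit as x → −α⁺ (i.e. g extends continuously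 to [−α,∞)). -/
open MeasureTheory Set Filter Topology
open scoped ContDiff

namespace BernsteinAux

lemma abs_one_sub_exp_le (u : ℝ) : |1 - Real.exp u| ≤ |u| * Real.exp |u| := by
  rcases le_total 0 u with hu | hu
  · rw [abs_of_nonneg hu, abs_of_nonpos (by nlinarith [Real.one_le_exp hu] : 1 - Real.exp u ≤ 0)]
    have h := Real.add_one_le_exp (-u)
    rw [Real.exp_neg] at h
    have h2 := mul_le_mul_of_nonneg_left h (Real.exp_pos u).le
    rw [mul_inv_cancel₀ (Real.exp_pos u).ne'] at h2
    nlinarith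
  · have h1 : Real.exp u ≤ 1 := Real.exp_le_one_iff.2 hu
    rw [abs_of_nonpos hu, abs_of_nonneg (by linarith : (0:ℝ) ≤ 1 - Real.exp u)]
    have h := Real.add_one_le_exp u
    nlinarith [Real.one_le_exp (neg_nonneg.2 hu)]

/-- bound for `|1 - exp(-(x t))|` uniform over `x` with `c ≤ x`, `|x| ≤ B`. -/
lemma one_sub_exp_bound {c x B t : ℝ} (hc : c ≤ 0) (hcx : c ≤ x) (hB : |x| ≤ B) (ht : 0 < t) :
    |1 - Real.exp (-(x * t))| ≤ (B * Real.exp B + 2) * (min t 1 * Real.exp (-(c * t))) := by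
  have hB0 : 0 ≤ B := le_trans (abs_nonneg x) hB
  have hBe : (0:ℝ) ≤ B * Real.exp B := mul_nonneg hB0 (Real.exp_pos B).le
  have hect : (1:ℝ) ≤ Real.exp (-(c * t)) := Real.one_le_exp (by nlinarith)
  rcases le_total t 1 with ht1 | ht1
  · have hmin : min t 1 = t := min_eq_left ht1
    have h1 : |1 - Real.exp (-(x * t))| ≤ |x * t| * Real.exp |x * t| := by
      have := abs_one_sub_exp_le (-(x * t)); rwa [abs_neg] at this
    have h2 : |x * t| ≤ B := by
      rw [abs_mul, abs_of_pos ht]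
      calc |x| * t ≤ B * 1 := mul_le_mul hB ht1 ht.le hB0
        _ = B := mul_one B
    have h2' : |x * t| ≤ B * t := by
      rw [abs_mul, abs_of_pos ht]
      exact mul_le_mul_of_nonneg_right hB ht.le
    have h3 : |x * t| * Real.exp |x * t| ≤ (B * t) * Real.exp B := by
      apply mul_le_mul h2' (Real.exp_le_exp.2 h2) (Real.exp_pos _).le (by positivity)
    rw [hmin]
    nlinarith [mul_nonneg hBe (sub_nonneg.2 hect), mul_nonneg (mul_nonneg hBe ht.le) (sub_nonneg.2 hect)]
  · have hmin : min t 1 = 1 := min_eq_right ht1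
    have hx1 : Real.exp (-(x * t)) ≤ Real.exp (-(c * t)) := by
      apply Real.exp_le_exp.2; nlinarith
    have h0 : |1 - Real.exp (-(x * t))| ≤ 1 + Real.exp (-(x * t)) := by
      apply abs_le.2
      constructor <;> nlinarith [Real.exp_pos (-(x * t))]
    rw [hmin]
    nlinarith [mul_nonneg hBe (sub_nonneg.2 hect)]

/-- bound for `t^k e^{-(d t)}`, `d > 0`, `k ≥ 1`. -/
lemma pow_exp_bound {k : ℕ} (hk : 1 ≤ k) {d t : ℝ} (hd : 0 < d) (ht : 0 < t) :
    t ^ k * Real.exp (-(d * t)) ≤ ((k.factorial : ℝ) * (2 / d) ^ k + 1) * min t 1 := by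
  have hK : (0:ℝ) ≤ (k.factorial : ℝ) * (2 / d) ^ k := by positivity
  rcases le_total t 1 with ht1 | ht1
  · have hmin : min t 1 = t := min_eq_left ht1
    have h1 : t ^ k ≤ t := pow_le_of_le_one ht.le ht1 (by omega)
    have h2 : Real.exp (-(d * t)) ≤ 1 := Real.exp_le_one_iff.2 (by nlinarith)
    rw [hmin]
    nlinarith [pow_pos ht k, mul_nonneg hK ht.le]
  · have hmin : min t 1 = 1 := min_eq_right ht1
    have key : t ^ k * Real.exp (-(d * t)) ≤ (k.factorial : ℝ) * (2 / d) ^ k := by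
      have h1 : (d / 2 * t) ^ k / (k.factorial : ℝ) ≤ Real.exp (d / 2 * t) :=
        Real.pow_div_factorial_le_exp _ (le_of_lt (by positivity : (0:ℝ) < d / 2 * t)) k
      have h2 : t ^ k ≤ (k.factorial : ℝ) * (2 / d) ^ k * Real.exp (d / 2 * t) := by
        have hfk : (0:ℝ) < (k.factorial : ℝ) := by positivity
        rw [mul_pow] at h1
        have h3 : (d / 2) ^ k * t ^ k ≤ (k.factorial : ℝ) * Real.exp (d / 2 * t) := by
          rw [div_le_iff₀ hfk] at h1; linarith [h1]
        have h4 : (2 / d) ^ k * ((d / 2) ^ k * t ^ k) ≤ (2 / d) ^ k * ((k.factorial : ℝ) * Real.exp (d / 2 * t)) :=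
          mul_le_mul_of_nonneg_left h3 (by positivity)
        have h5 : (2 / d) ^ k * (d / 2) ^ k = 1 := by
          rw [← mul_pow]; rw [div_mul_div_comm]
          rw [show (2 : ℝ) * d / (d * 2) = 1 by rw [mul_comm]; field_simp]
          exact one_pow k
        calc t ^ k = (2 / d) ^ k * (d / 2) ^ k * t ^ k := by rw [h5, one_mul]
          _ = (2 / d) ^ k * ((d / 2) ^ k * t ^ k) := by ring
          _ ≤ (2 / d) ^ k * ((k.factorial : ℝ) * Real.exp (d / 2 * t)) := h4
          _ = (k.factorial : ℝ) * (2 / d) ^ k * Real.exp (d / 2 * t) := by ring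
      have h6 : t ^ k * Real.exp (-(d * t)) ≤
          (k.factorial : ℝ) * (2 / d) ^ k * Real.exp (d / 2 * t) * Real.exp (-(d * t)) :=
        mul_le_mul_of_nonneg_right h2 (Real.exp_pos _).le
      have h7 : Real.exp (d / 2 * t) * Real.exp (-(d * t)) = Real.exp (-(d / 2 * t)) := by
        rw [← Real.exp_add]; ring_nf
      have h8 : Real.exp (-(d / 2 * t)) ≤ 1 := Real.exp_le_one_iff.2 (by nlinarith)
      calc t ^ k * Real.exp (-(d * t)) ≤
          (k.factorial : ℝ) * (2 / d) ^ k * (Real.exp (d / 2 * t) * Real.exp (-(d * t))) := by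
            rw [← mul_assoc]; exact h6
        _ = (k.factorial : ℝ) * (2 / d) ^ k * Real.exp (-(d / 2 * t)) := by rw [h7]
        _ ≤ (k.factorial : ℝ) * (2 / d) ^ k * 1 := mul_le_mul_of_nonneg_left h8 hK
        _ = (k.factorial : ℝ) * (2 / d) ^ k := mul_one _
    rw [hmin, mul_one]
    linarith
-- Part 2 : integrability and derivative lemmas
noncomputable def D (ρ : Measure ℝ) (k : ℕ) (x : ℝ) : ℝ :=
  ∫ t in Set.Ioi (0:ℝ), t ^ k * Real.exp (-(x * t)) ∂ρ

noncomputable def G (ρ : Measure ℝ) (x : ℝ) : ℝ :=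
  ∫ t in Set.Ioi (0:ℝ), (1 - Real.exp (-(x * t))) ∂ρ

def Mom (ρ : Measure ℝ) (c : ℝ) : Prop :=
  ∫⁻ t in Set.Ioi (0:ℝ), ENNReal.ofReal (min t 1 * Real.exp (-(c * t))) ∂ρ < ⊤

variable {ρ : Measure ℝ} {c : ℝ}

lemma Mom.integrable_base (h : Mom ρ c) :
    Integrable (fun t => min t 1 * Real.exp (-(c * t))) (ρ.restrict (Set.Ioi 0)) := by
  constructor
  · exact ((continuous_min.comp (continuous_id.prodMk continuous_const)).mul
      ((continuous_const.mul continuous_id).neg.rexp)).aestronglyMeasurable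
  · rw [hasFiniteIntegral_iff_ofReal]
    · exact h
    · filter_upwards [ae_restrict_mem measurableSet_Ioi] with t ht
      have : (0:ℝ) < t := ht
      positivity

lemma integrable_one_sub_exp (hc : c ≤ 0) (h : Mom ρ c) {x : ℝ} (hx : c ≤ x) :
    Integrable (fun t => 1 - Real.exp (-(x * t))) (ρ.restrict (Set.Ioi 0)) := by
  apply Integrable.mono' ((h.integrable_base).const_mul (|x| * Real.exp |x| + 2))
  · exact (continuous_const.sub ((continuous_const.mul continuous_id).neg.rexp)).aestronglyMeasurable
  · filter_upwards [ae_restrict_mem measurableSet_Ioi] with t ht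
    exact one_sub_exp_bound hc hx le_rfl ht

lemma integrable_pow_exp (h : Mom ρ c) {k : ℕ} (hk : 1 ≤ k) {x : ℝ} (hx : c < x) :
    Integrable (fun t => t ^ k * Real.exp (-(x * t))) (ρ.restrict (Set.Ioi 0)) := by
  apply Integrable.mono'
    ((h.integrable_base).const_mul ((k.factorial : ℝ) * (2 / (x - c)) ^ k + 1))
  · exact ((continuous_pow k).mul ((continuous_const.mul continuous_id).neg.rexp)).aestronglyMeasurable
  · filter_upwards [ae_restrict_mem measurableSet_Ioi] with t ht
    have ht' : (0:ℝ) < t := ht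
    have hsplit : Real.exp (-(x * t)) = Real.exp (-((x - c) * t)) * Real.exp (-(c * t)) := by
      rw [← Real.exp_add]; ring_nf
    have h1 : ‖t ^ k * Real.exp (-(x * t))‖ = t ^ k * Real.exp (-((x - c) * t)) * Real.exp (-(c * t)) := by
      rw [Real.norm_eq_abs, abs_of_nonneg (by positivity), hsplit, mul_assoc]
    rw [h1]
    have h2 := pow_exp_bound hk (sub_pos.2 hx) ht'
    calc t ^ k * Real.exp (-((x - c) * t)) * Real.exp (-(c * t))
        ≤ (((k.factorial : ℝ) * (2 / (x - c)) ^ k + 1) * min t 1) * Real.exp (-(c * t)) :=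
          mul_le_mul_of_nonneg_right h2 (Real.exp_pos _).le
      _ = ((k.factorial : ℝ) * (2 / (x - c)) ^ k + 1) * (min t 1 * Real.exp (-(c * t))) := by ring

lemma D_nonneg {k : ℕ} {x : ℝ} : 0 ≤ D ρ k x := by
  apply setIntegral_nonneg measurableSet_Ioi
  intro t ht
  have : (0:ℝ) < t := ht
  positivity

lemma hasDerivAt_D (h : Mom ρ c) {k : ℕ} (hk : 1 ≤ k) {x : ℝ} (hx : c < x) :
    HasDerivAt (D ρ k) (-D ρ (k + 1) x) x := by
  set ε := (x - c) / 2 with hε_def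
  have hε : 0 < ε := by simp only [hε_def]; linarith
  have hxc' : c < x - ε := by simp only [hε_def]; linarith
  have key := hasDerivAt_integral_of_dominated_loc_of_deriv_le (μ := ρ.restrict (Set.Ioi 0))
    (F := fun y t => t ^ k * Real.exp (-(y * t)))
    (F' := fun y t => -(t ^ (k + 1) * Real.exp (-(y * t))))
    (bound := fun t => t ^ (k + 1) * Real.exp (-((x - ε) * t)))
    (x₀ := x) (Metric.ball_mem_nhds x hε) ?_ ?_ ?_ ?_ ?_ ?_
  · have h2 : ∫ t in Set.Ioi (0:ℝ), -(t ^ (k+1) * Real.exp (-(x * t))) ∂ρ = -D ρ (k+1) x := by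
      rw [integral_neg]; rfl
    rw [h2] at key
    exact key.2
  · exact Eventually.of_forall fun y =>
      ((continuous_pow k).mul ((continuous_const.mul continuous_id).neg.rexp)).aestronglyMeasurable
  · exact integrable_pow_exp h hk hx
  · exact (((continuous_pow (k+1)).mul
      ((continuous_const.mul continuous_id).neg.rexp)).neg).aestronglyMeasurable
  · filter_upwards [ae_restrict_mem measurableSet_Ioi] with t ht
    intro y hy
    have ht' : (0:ℝ) < t := ht
    have hy' : x - ε < y := by
      have := abs_lt.1 (mem_ball_iff_norm.1 hy)
      linarith [this.1]
    rw [norm_neg, Real.norm_eq_abs, abs_of_nonneg (by positivity)]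
    apply mul_le_mul_of_nonneg_left _ (by positivity : (0:ℝ) ≤ t ^ (k+1))
    exact Real.exp_le_exp.2 (by nlinarith)
  · exact integrable_pow_exp h (by omega) hxc'
  · filter_upwards [ae_restrict_mem measurableSet_Ioi] with t ht
    intro y hy
    have h1 : HasDerivAt (fun y : ℝ => -(y * t)) (-t) y := by exact ((hasDerivAt_id y).mul_const t).neg.congr_deriv (by ring)
    have h2 : HasDerivAt (fun y : ℝ => Real.exp (-(y * t))) (Real.exp (-(y * t)) * -t) y :=
      (Real.hasDerivAt_exp _).comp y h1
    have h3 := h2.const_mul (t ^ k)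
    exact h3.congr_deriv (by ring)

lemma hasDerivAt_G (hc : c ≤ 0) (h : Mom ρ c) {x : ℝ} (hx : c < x) :
    HasDerivAt (G ρ) (D ρ 1 x) x := by
  set ε := (x - c) / 2 with hε_def
  have hε : 0 < ε := by simp only [hε_def]; linarith
  have hxc' : c < x - ε := by simp only [hε_def]; linarith
  have key := hasDerivAt_integral_of_dominated_loc_of_deriv_le (μ := ρ.restrict (Set.Ioi 0))
    (F := fun y t => 1 - Real.exp (-(y * t)))
    (F' := fun y t => t * Real.exp (-(y * t)))
    (bound := fun t => t ^ 1 * Real.exp (-((x - ε) * t)))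
    (x₀ := x) (Metric.ball_mem_nhds x hε) ?_ ?_ ?_ ?_ ?_ ?_
  · have h2 : ∫ t in Set.Ioi (0:ℝ), t * Real.exp (-(x * t)) ∂ρ = D ρ 1 x := by
      apply setIntegral_congr_fun measurableSet_Ioi
      intro t _; simp [pow_one]
    rw [h2] at key
    exact key.2
  · exact Eventually.of_forall fun y =>
      (continuous_const.sub ((continuous_const.mul continuous_id).neg.rexp)).aestronglyMeasurable
  · exact integrable_one_sub_exp hc h hx.le
  · exact (continuous_id.mul ((continuous_const.mul continuous_id).neg.rexp)).aestronglyMeasurable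
  · filter_upwards [ae_restrict_mem measurableSet_Ioi] with t ht
    intro y hy
    have ht' : (0:ℝ) < t := ht
    have hy' : x - ε < y := by
      have := abs_lt.1 (mem_ball_iff_norm.1 hy)
      linarith [this.1]
    rw [Real.norm_eq_abs, abs_of_nonneg (by positivity), pow_one]
    apply mul_le_mul_of_nonneg_left _ ht'.le
    exact Real.exp_le_exp.2 (by nlinarith)
  · exact integrable_pow_exp h le_rfl hxc'
  · filter_upwards [ae_restrict_mem measurableSet_Ioi] with t ht
    intro y hy
    have h1 : HasDerivAt (fun y : ℝ => -(y * t)) (-t) y := by exact ((hasDerivAt_id y).mul_const t).neg.congr_deriv (by ring)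
    have h2 : HasDerivAt (fun y : ℝ => Real.exp (-(y * t))) (Real.exp (-(y * t)) * -t) y :=
      (Real.hasDerivAt_exp _).comp y h1
    have h3 := h2.const_sub 1
    exact h3.congr_deriv (by ring)
-- Part 3 : smoothness and iterated derivatives
lemma contDiffOn_D (h : Mom ρ c) :
    ∀ n : ℕ, ∀ k : ℕ, 1 ≤ k → ContDiffOn ℝ n (D ρ k) (Set.Ioi c) := by
  intro n
  induction n with
  | zero =>
    intro k hk
    rw [Nat.cast_zero, contDiffOn_zero]
    intro x hx
    exact ((hasDerivAt_D h hk hx).continuousAt).continuousWithinAt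
  | succ n IH =>
    intro k hk
    have : ((n + 1 : ℕ) : WithTop ℕ∞) = (n : WithTop ℕ∞) + 1 := by push_cast; rfl
    rw [this, contDiffOn_succ_iff_derivWithin isOpen_Ioi.uniqueDiffOn]
    refine ⟨fun x hx => ((hasDerivAt_D h hk hx).differentiableAt).differentiableWithinAt,
      by simp, ?_⟩
    apply ContDiffOn.congr ((IH (k+1) (by omega)).neg)
    intro x hx
    rw [derivWithin_of_isOpen isOpen_Ioi hx]
    exact (hasDerivAt_D h hk hx).deriv

lemma contDiffOn_G (hc : c ≤ 0) (h : Mom ρ c) (n : ℕ) :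
    ContDiffOn ℝ n (G ρ) (Set.Ioi c) := by
  induction n with
  | zero =>
    rw [Nat.cast_zero, contDiffOn_zero]
    intro x hx
    exact ((hasDerivAt_G hc h hx).continuousAt).continuousWithinAt
  | succ n IH =>
    have : ((n + 1 : ℕ) : WithTop ℕ∞) = (n : WithTop ℕ∞) + 1 := by push_cast; rfl
    rw [this, contDiffOn_succ_iff_derivWithin isOpen_Ioi.uniqueDiffOn]
    refine ⟨fun x hx => ((hasDerivAt_G hc h hx).differentiableAt).differentiableWithinAt,
      by simp, ?_⟩
    apply ContDiffOn.congr (contDiffOn_D h n 1 le_rfl)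
    intro x hx
    rw [derivWithin_of_isOpen isOpen_Ioi hx]
    exact (hasDerivAt_G hc h hx).deriv

lemma contDiffOn_g (hc : c ≤ 0) (h : Mom ρ c) {β : ℝ} :
    ContDiffOn ℝ (⊤ : ℕ∞) (fun x => β * x + G ρ x) (Set.Ioi c) := by
  rw [show (((⊤ : ℕ∞) : WithTop ℕ∞)) = ∞ from rfl, contDiffOn_infty]
  intro n
  exact ((contDiff_const.mul contDiff_id).contDiffOn).add (contDiffOn_G hc h n)

lemma iteratedDeriv_g (hc : c ≤ 0) (h : Mom ρ c) {β : ℝ} :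
    ∀ k : ℕ, 1 ≤ k → ∀ x ∈ Set.Ioi c,
      iteratedDeriv k (fun y => β * y + G ρ y) x
        = (if k = 1 then β else 0) + (-1 : ℝ) ^ (k + 1) * D ρ k x := by
  intro k
  induction k with
  | zero => omega
  | succ k IH =>
    rcases Nat.eq_or_lt_of_le (Nat.one_le_iff_ne_zero.2 (Nat.succ_ne_zero k)) with h1 | h1
    · -- k + 1 = 1, i.e. k = 0
      intro _ x hx
      have hk0 : k = 0 := by omega
      subst hk0
      have hD : HasDerivAt (fun y => β * y + G ρ y) (β + D ρ 1 x) x := by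
        have := ((hasDerivAt_id x).const_mul β).add (hasDerivAt_G hc h hx)
        exact this.congr_deriv (by ring)
      rw [iteratedDeriv_one, hD.deriv]
      norm_num
    · -- k ≥ 1
      intro _ x hx
      have hk1 : 1 ≤ k := by omega
      rw [iteratedDeriv_succ]
      have hev : iteratedDeriv k (fun y => β * y + G ρ y)
          =ᶠ[𝓝 x] fun y => (if k = 1 then β else 0) + (-1 : ℝ) ^ (k + 1) * D ρ k y := by
        filter_upwards [isOpen_Ioi.mem_nhds hx] with y hy
        exact IH hk1 y hy
      rw [hev.deriv_eq]
      have hD : HasDerivAt (fun y => (if k = 1 then β else 0) + (-1 : ℝ) ^ (k + 1) * D ρ k y)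
          ((-1 : ℝ) ^ (k + 1) * -D ρ (k + 1) x) x :=
        (((hasDerivAt_D h hk1 hx).const_mul ((-1 : ℝ) ^ (k + 1)))).const_add _
      rw [hD.deriv]
      have : k + 1 ≠ 1 := by omega
      rw [if_neg this]
      ring
-- Part 4 : generic iterated-derivative helpers
lemma iteratedDerivWithin_isOpen {f : ℝ → ℝ} {s : Set ℝ} (hs : IsOpen s) {x : ℝ} (hx : x ∈ s)
    (n : ℕ) : iteratedDerivWithin n f s x = iteratedDeriv n f x := by
  simp only [iteratedDerivWithin, iteratedDeriv, iteratedFDerivWithin_of_isOpen n hs hx]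

lemma diffAt_iteratedDeriv {f : ℝ → ℝ} {u : Set ℝ} (hu : IsOpen u)
    (hf : ContDiffOn ℝ (⊤ : ℕ∞) f u) (m : ℕ) {y : ℝ} (hy : y ∈ u) :
    DifferentiableAt ℝ (iteratedDeriv m f) y := by
  have hf' : ContDiffOn ℝ ((m+1 : ℕ) : WithTop ℕ∞) f u := by
    apply hf.of_le
    exact_mod_cast le_top
  have h1 : DifferentiableOn ℝ (iteratedDerivWithin m f u) u :=
    hf'.differentiableOn_iteratedDerivWithin
      (by exact_mod_cast Nat.lt_succ_self m) hu.uniqueDiffOn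
  have h2 : DifferentiableAt ℝ (iteratedDerivWithin m f u) y :=
    (h1 y hy).differentiableAt (hu.mem_nhds hy)
  apply h2.congr_of_eventuallyEq
  filter_upwards [hu.mem_nhds hy] with z hz
  exact (iteratedDerivWithin_isOpen hu hz m).symm

lemma iteratedDerivWithin_eq_of_uniqueDiffOn {f : ℝ → ℝ} {s : Set ℝ}
    (hs : UniqueDiffOn ℝ s)
    (hd : ∀ (m : ℕ), ∀ y ∈ s, DifferentiableAt ℝ (iteratedDeriv m f) y) :
    ∀ (n : ℕ), ∀ x ∈ s, iteratedDerivWithin n f s x = iteratedDeriv n f x := by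
  intro n
  induction n with
  | zero => intro x _; simp
  | succ n IH =>
    intro x hx
    rw [iteratedDerivWithin_succ, iteratedDeriv_succ]
    rw [derivWithin_congr (fun y hy => IH y hy) (IH x hx)]
    exact DifferentiableAt.derivWithin (hd n x hx) (hs.uniqueDiffWithinAt hx)
-- Part 5 : forward direction
lemma forward_ex (β : ℝ) (hβ : 0 ≤ β) (ρ : Measure ℝ) {α : ℝ} (hα : 0 < α)
    (hm : Mom ρ (-α)) :
    ContDiffOn ℝ (⊤ : ℕ∞) (fun x => β * x + G ρ x) (Set.Ioi (-α)) ∧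
    (∀ k : ℕ, 1 ≤ k → ∀ x ∈ Set.Ioi (-α),
      0 ≤ (-1 : ℝ) ^ (k + 1) *
        iteratedDerivWithin k (fun x => β * x + G ρ x) (Set.Ioi (-α)) x) ∧
    ∃ L : ℝ, Tendsto (fun x => β * x + G ρ x) (𝓝[>] (-α)) (𝓝 L) := by
  have hc : -α ≤ 0 := by linarith
  refine ⟨contDiffOn_g hc hm, ?_, ?_⟩
  · intro k hk x hx
    rw [iteratedDerivWithin_isOpen isOpen_Ioi hx, iteratedDeriv_g hc hm k hk x hx]
    have hsq : (-1 : ℝ) ^ (k + 1) * (-1 : ℝ) ^ (k + 1) = 1 := by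
      rw [← pow_add]
      exact Even.neg_one_pow ⟨k + 1, by ring⟩
    rcases eq_or_ne k 1 with hk1 | hk1
    · subst hk1
      norm_num
      nlinarith [D_nonneg (ρ := ρ) (k := 1) (x := x)]
    · rw [if_neg hk1]
      rw [zero_add, ← mul_assoc, hsq, one_mul]
      exact D_nonneg
  · refine ⟨β * (-α) + G ρ (-α), Tendsto.add ?_ ?_⟩
    · exact ((continuous_const.mul continuous_id).tendsto (-α)).mono_left nhdsWithin_le_nhds
    · unfold G
      apply tendsto_integral_filter_of_dominated_convergence
        (bound := fun t => ((α + 1) * Real.exp (α + 1) + 2) * (min t 1 * Real.exp (-(-α * t))))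
      · exact Eventually.of_forall fun y =>
          (continuous_const.sub ((continuous_const.mul continuous_id).neg.rexp)).aestronglyMeasurable
      · filter_upwards [Ioo_mem_nhdsGT (by linarith : -α < -α + 1)] with x hx
        filter_upwards [ae_restrict_mem measurableSet_Ioi] with t ht
        apply one_sub_exp_bound hc hx.1.le _ ht
        rw [abs_le]
        constructor <;> [linarith [hx.1]; linarith [hx.2]]
      · exact (hm.integrable_base).const_mul _
      · filter_upwards [ae_restrict_mem measurableSet_Ioi] with t _
        have hcont : Continuous fun x : ℝ => 1 - Real.exp (-(x * t)) := by
          exact continuous_const.sub ((continuous_id.mul continuous_const).neg.rexp)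
        exact (hcont.tendsto (-α)).mono_left nhdsWithin_le_nhds
-- Part 6 : reverse direction
lemma tsum_pow_succ_div_factorial (y : ℝ) :
    ∑' k : ℕ, y ^ (k + 1) / ((k + 1).factorial : ℝ) = Real.exp y - 1 := by
  have hs := Real.summable_pow_div_factorial y
  have h0 : Real.exp y = ∑' k : ℕ, y ^ k / (k.factorial : ℝ) := by
    rw [Real.exp_eq_exp_ℝ, NormedSpace.exp_eq_tsum_div]
  rw [hs.tsum_eq_zero_add] at h0
  simp only [pow_zero, Nat.factorial_zero, Nat.cast_one, div_one] at h0
  linarith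

lemma reverse_ex (β : ℝ) (hβ : 0 ≤ β) (ρ : Measure ℝ) {α : ℝ} (hα : 0 < α)
    (hm0 : Mom ρ 0)
    (g : ℝ → ℝ)
    (hg_smooth : ContDiffOn ℝ (⊤ : ℕ∞) g (Set.Ioi (-α)))
    (hg_eq : Set.EqOn g (fun x => β * x + G ρ x) (Set.Ioi 0))
    (hg_sign : ∀ k : ℕ, 1 ≤ k → ∀ x ∈ Set.Ioi (-α),
      0 ≤ (-1 : ℝ) ^ (k + 1) * iteratedDerivWithin k g (Set.Ioi (-α)) x)
    (L : ℝ) (hgL : Tendsto g (𝓝[>] (-α)) (𝓝 L)) :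
    ∫⁻ t in Set.Ioi (1 : ℝ), ENNReal.ofReal (Real.exp (α * t)) ∂ρ < ⊤ := by
  have hα0 : (-α : ℝ) < 0 := by linarith
  -- signs with global iterated derivatives
  have hs' : ∀ k : ℕ, 1 ≤ k → ∀ y ∈ Set.Ioi (-α), 0 ≤ (-1 : ℝ) ^ (k + 1) * iteratedDeriv k g y := by
    intro k hk y hy
    rw [← iteratedDerivWithin_isOpen isOpen_Ioi hy k]
    exact hg_sign k hk y hy
  -- derivatives of g at 1
  have hgk : ∀ k : ℕ, 1 ≤ k →
      iteratedDeriv k g 1 = (if k = 1 then β else 0) + (-1 : ℝ) ^ (k + 1) * D ρ k 1 := by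
    intro k hk
    have h1 : iteratedDeriv k g 1 = iteratedDeriv k (fun x => β * x + G ρ x) 1 :=
      hg_eq.iteratedDeriv_of_isOpen isOpen_Ioi k (by norm_num : (1:ℝ) ∈ Set.Ioi (0:ℝ))
    rw [h1]
    exact iteratedDeriv_g le_rfl hm0 k hk 1 (by norm_num)
  -- the reflected function
  set φ : ℝ → ℝ := fun x => -g (-x) with hφ_def
  have hφ_smooth : ContDiffOn ℝ (⊤ : ℕ∞) φ (Set.Iio α) := by
    have h1 : ContDiffOn ℝ (⊤ : ℕ∞) (fun x : ℝ => g (-x)) (Set.Iio α) := by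
      apply hg_smooth.comp (contDiff_neg.contDiffOn)
      intro x hx
      simp only [Set.mem_Ioi, Set.mem_preimage]
      exact neg_lt_neg hx
    exact h1.neg
  have hφd : ∀ (m : ℕ), ∀ y ∈ Set.Iio α, DifferentiableAt ℝ (iteratedDeriv m φ) y :=
    fun m y hy => diffAt_iteratedDeriv isOpen_Iio hφ_smooth m hy
  have hφk : ∀ (k : ℕ) (y : ℝ), iteratedDeriv k φ y = -((-1 : ℝ) ^ k * iteratedDeriv k g (-y)) := by
    intro k y
    have h1 := iteratedDeriv_comp_neg k (fun z => -g z) y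
    have h2 : iteratedDeriv k (fun z => -g z) (-y) = -iteratedDeriv k g (-y) :=
      iteratedDeriv_neg k g (-y)
    rw [hφ_def]
    rw [h1, h2, smul_eq_mul]
    ring
  -- Taylor estimate
  have key1 : ∀ (n : ℕ) (x : ℝ), -1 < x → x < α →
      (∑ k ∈ Finset.range n, ((x + 1) ^ (k + 1) / ((k + 1).factorial : ℝ)) * D ρ (k + 1) 1)
        ≤ g 1 - g (-x) := by
    intro n x hx1 hx2
    have hIcc : Set.Icc (-1 : ℝ) x ⊆ Set.Iio α := fun y hy => lt_of_le_of_lt hy.2 hx2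
    have hud : UniqueDiffOn ℝ (Set.Icc (-1 : ℝ) x) := uniqueDiffOn_Icc (by linarith)
    have hiter : ∀ (m : ℕ), ∀ y ∈ Set.Icc (-1 : ℝ) x,
        iteratedDerivWithin m φ (Set.Icc (-1 : ℝ) x) y = iteratedDeriv m φ y :=
      fun m => iteratedDerivWithin_eq_of_uniqueDiffOn hud
        (fun m' y hy => hφd m' y (hIcc hy)) m
    obtain ⟨ξ, hξ, hT⟩ := taylor_mean_remainder_lagrange (f := φ) (x₀ := -1) (x := x) (n := n)
      hx1.ne
      (by
        rw [Set.uIcc_of_le hx1.le]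
        apply ContDiffOn.mono _ hIcc
        exact hφ_smooth.of_le (by exact_mod_cast le_top))
      (by
        have hdo : DifferentiableOn ℝ (iteratedDeriv n φ) (Set.Ioo (-1 : ℝ) x) :=
          fun y hy => (hφd n y (hIcc (Set.Ioo_subset_Icc_self hy))).differentiableWithinAt
        rw [Set.uIcc_of_le hx1.le, Set.uIoo_of_le hx1.le]
        exact hdo.congr fun y hy => hiter n y (Set.Ioo_subset_Icc_self hy))
    rw [Set.uIcc_of_le hx1.le] at hT
    rw [Set.uIoo_of_le hx1.le] at hξ
    -- remainder is nonnegative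
    have hRem : 0 ≤ iteratedDerivWithin (n + 1) φ (Set.Icc (-1 : ℝ) x) ξ
        * (x - (-1)) ^ (n + 1) / ((n + 1).factorial : ℝ) := by
      have hξIcc : ξ ∈ Set.Icc (-1 : ℝ) x := Set.Ioo_subset_Icc_self hξ
      rw [hiter (n + 1) ξ hξIcc, hφk (n + 1) ξ]
      have hmem : -ξ ∈ Set.Ioi (-α) := by
        simp only [Set.mem_Ioi]
        have : ξ < α := lt_trans hξ.2 hx2
        linarith
      have hsign := hs' (n + 1) (by omega) (-ξ) hmem
      have heq : -((-1 : ℝ) ^ (n + 1) * iteratedDeriv (n + 1) g (-ξ))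
          = (-1 : ℝ) ^ (n + 1 + 1) * iteratedDeriv (n + 1) g (-ξ) := by
        rw [pow_succ]; ring
      rw [heq]
      exact div_nonneg (mul_nonneg hsign (pow_nonneg (by linarith) _)) (by positivity)
    -- hence φ x ≥ Taylor polynomial
    have hTaylor_le : taylorWithinEval φ n (Set.Icc (-1 : ℝ) x) (-1) x ≤ φ x := by
      rw [← hT] at hRem
      linarith
    -- expand the Taylor polynomial
    rw [taylor_within_apply] at hTaylor_le
    -- coefficients
    have hcoeff : ∀ k : ℕ, 1 ≤ k →
        iteratedDerivWithin k φ (Set.Icc (-1 : ℝ) x) (-1)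
          = (if k = 1 then β else 0) + D ρ k 1 := by
      intro k hk
      rw [hiter k (-1) (Set.left_mem_Icc.2 (by linarith)), hφk k (-1), neg_neg, hgk k hk]
      rcases eq_or_ne k 1 with hk1 | hk1
      · subst hk1; norm_num
      · rw [if_neg hk1]
        have hodd : (-1 : ℝ) ^ k * (-1 : ℝ) ^ (k + 1) = -1 := by
          rw [← pow_add]
          exact Odd.neg_one_pow ⟨k, by ring⟩
        linear_combination (-(D ρ k 1)) * hodd
    have hcoeff0 : iteratedDerivWithin 0 φ (Set.Icc (-1 : ℝ) x) (-1) = -g 1 := by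
      rw [hiter 0 (-1) (Set.left_mem_Icc.2 (by linarith))]
      simp [hφ_def]
    -- split off k = 0
    rw [Finset.sum_range_succ'] at hTaylor_le
    simp only [hcoeff0, pow_zero, Nat.factorial_zero, Nat.cast_one, inv_one, one_mul,
      smul_eq_mul, mul_one] at hTaylor_le
    have hφx : φ x = -g (-x) := rfl
    have hmain : ∑ k ∈ Finset.range n,
        (((k + 1).factorial : ℝ)⁻¹ * (x - (-1)) ^ (k + 1)) * iteratedDerivWithin (k + 1) φ (Set.Icc (-1 : ℝ) x) (-1)
        ≤ -g (-x) + g 1 := by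
      have := hTaylor_le
      linarith [this, hφx]
    calc ∑ k ∈ Finset.range n, ((x + 1) ^ (k + 1) / ((k + 1).factorial : ℝ)) * D ρ (k + 1) 1
        ≤ ∑ k ∈ Finset.range n,
          (((k + 1).factorial : ℝ)⁻¹ * (x - (-1)) ^ (k + 1)) * iteratedDerivWithin (k + 1) φ (Set.Icc (-1 : ℝ) x) (-1) := by
          apply Finset.sum_le_sum
          intro k _
          rw [hcoeff (k + 1) (by omega)]
          have hxp : (0:ℝ) ≤ (x + 1) ^ (k + 1) := pow_nonneg (by linarith) _
          have hif : (0:ℝ) ≤ (if k + 1 = 1 then β else 0) := by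
            split_ifs
            exacts [hβ, le_refl 0]
          have hxx : (x - (-1 : ℝ)) = x + 1 := by ring
          rw [hxx, show (x + 1) ^ (k + 1) / (((k+1).factorial : ℕ) : ℝ) * D ρ (k+1) 1
            = ((((k+1).factorial : ℕ) : ℝ)⁻¹ * (x + 1) ^ (k + 1)) * D ρ (k+1) 1 from by ring]
          exact mul_le_mul_of_nonneg_left (by linarith [hif])
            (mul_nonneg (by positivity) (pow_nonneg (by linarith) _))
      _ ≤ -g (-x) + g 1 := hmain
      _ = g 1 - g (-x) := by ring
  -- take the limit x → α⁻
  have key2 : ∀ n : ℕ,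
      (∑ k ∈ Finset.range n, ((α + 1) ^ (k + 1) / ((k + 1).factorial : ℝ)) * D ρ (k + 1) 1)
        ≤ g 1 - L := by
    intro n
    have hneg : Tendsto (fun x : ℝ => -x) (𝓝[<] α) (𝓝[>] (-α)) := by
      apply tendsto_nhdsWithin_of_tendsto_nhds_of_eventually_within
      · exact (continuous_neg.tendsto α).mono_left nhdsWithin_le_nhds
      · filter_upwards [self_mem_nhdsWithin] with x hx
        exact Set.mem_Ioi.2 (neg_lt_neg hx)
    have hR : Tendsto (fun x : ℝ => g 1 - g (-x)) (𝓝[<] α) (𝓝 (g 1 - L)) :=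
      tendsto_const_nhds.sub (hgL.comp hneg)
    have hS : Tendsto
        (fun x : ℝ => ∑ k ∈ Finset.range n, ((x + 1) ^ (k + 1) / ((k + 1).factorial : ℝ)) * D ρ (k + 1) 1)
        (𝓝[<] α)
        (𝓝 (∑ k ∈ Finset.range n, ((α + 1) ^ (k + 1) / ((k + 1).factorial : ℝ)) * D ρ (k + 1) 1)) := by
      apply Tendsto.mono_left _ nhdsWithin_le_nhds
      apply tendsto_finset_sum
      intro k _
      exact ((((continuous_id.add continuous_const).pow (k+1)).div_const _).mul continuous_const).tendsto α
    apply le_of_tendsto_of_tendsto hS hR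
    filter_upwards [Ioo_mem_nhdsLT (show (-1:ℝ) < α by linarith)] with x hx
    exact key1 n x hx.1 hx.2
  -- lintegral machinery
  have hDint : ∀ j : ℕ, 1 ≤ j →
      Integrable (fun t => t ^ j * Real.exp (-(1 * t))) (ρ.restrict (Set.Ioi 0)) :=
    fun j hj => integrable_pow_exp hm0 hj (by norm_num)
  set M := g 1 - L with hM
  have hJ : ∀ j : ℕ, 1 ≤ j →
      ∫⁻ t in Set.Ioi (0:ℝ),
        ENNReal.ofReal (((α+1)^j / (j.factorial : ℝ)) * (t ^ j * Real.exp (-(1 * t)))) ∂ρ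
        = ENNReal.ofReal (((α+1)^j / (j.factorial : ℝ)) * D ρ j 1) := by
    intro j hj
    rw [← MeasureTheory.ofReal_integral_eq_lintegral_ofReal ((hDint j hj).const_mul _)]
    · congr 1
      rw [integral_const_mul]
      rfl
    · filter_upwards [ae_restrict_mem measurableSet_Ioi] with t ht
      have ht' : (0:ℝ) < t := ht
      positivity
  have htsum : (∑' k : ℕ, ∫⁻ t in Set.Ioi (0:ℝ),
      ENNReal.ofReal (((α+1)^(k+1) / ((k+1).factorial : ℝ)) * (t ^ (k+1) * Real.exp (-(1 * t)))) ∂ρ)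
      ≤ ENNReal.ofReal M := by
    apply ENNReal.tsum_le_of_sum_range_le
    intro n
    have h1 : ∑ k ∈ Finset.range n, (∫⁻ t in Set.Ioi (0:ℝ),
        ENNReal.ofReal (((α+1)^(k+1) / ((k+1).factorial : ℝ)) * (t ^ (k+1) * Real.exp (-(1 * t)))) ∂ρ)
        = ∑ k ∈ Finset.range n,
          ENNReal.ofReal (((α+1)^(k+1) / ((k+1).factorial : ℝ)) * D ρ (k+1) 1) :=
      Finset.sum_congr rfl fun k _ => hJ (k+1) (by omega)
    rw [h1, ← ENNReal.ofReal_sum_of_nonneg]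
    · exact ENNReal.ofReal_le_ofReal (key2 n)
    · intro k _
      have hD := D_nonneg (ρ := ρ) (k := k+1) (x := (1:ℝ))
      positivity
  have hexch := lintegral_tsum (μ := ρ.restrict (Set.Ioi 0))
    (f := fun (k : ℕ) (t : ℝ) => ENNReal.ofReal
      (((α+1)^(k+1) / ((k+1).factorial : ℝ)) * (t ^ (k+1) * Real.exp (-(1 * t)))))
    (fun k => (((continuous_const.mul ((continuous_pow (k+1)).mul
        ((continuous_const.mul continuous_id).neg.rexp))).measurable.ennreal_ofReal).aemeasurable))
  rw [← hexch] at htsum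
  have hpt : ∀ᵐ t ∂(ρ.restrict (Set.Ioi 0)),
      (∑' k : ℕ, ENNReal.ofReal (((α+1)^(k+1) / ((k+1).factorial : ℝ)) * (t ^ (k+1) * Real.exp (-(1 * t)))))
        = ENNReal.ofReal ((Real.exp ((α+1)*t) - 1) * Real.exp (-(1*t))) := by
    filter_upwards [ae_restrict_mem measurableSet_Ioi] with t ht
    have ht' : (0:ℝ) < t := ht
    have hterm : ∀ k : ℕ, ((α+1)^(k+1) / ((k+1).factorial : ℝ)) * (t ^ (k+1) * Real.exp (-(1 * t)))
        = ((α+1)*t)^(k+1) / ((k+1).factorial : ℝ) * Real.exp (-(1*t)) := by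
      intro k; rw [mul_pow]; ring
    have hsummable : Summable (fun k : ℕ =>
        ((α+1)*t)^(k+1) / ((k+1).factorial : ℝ) * Real.exp (-(1*t))) :=
      ((summable_nat_add_iff 1).2
        ((Real.summable_pow_div_factorial ((α+1)*t)).mul_right _))
    have hval : (∑' k : ℕ, ((α+1)*t)^(k+1) / ((k+1).factorial : ℝ) * Real.exp (-(1*t)))
        = (Real.exp ((α+1)*t) - 1) * Real.exp (-(1*t)) := by
      rw [tsum_mul_right, tsum_pow_succ_div_factorial]
    calc (∑' k : ℕ, ENNReal.ofReal (((α+1)^(k+1) / ((k+1).factorial : ℝ)) * (t ^ (k+1) * Real.exp (-(1 * t)))))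
        = ∑' k : ℕ, ENNReal.ofReal (((α+1)*t)^(k+1) / ((k+1).factorial : ℝ) * Real.exp (-(1*t))) :=
          tsum_congr fun k => by rw [hterm k]
      _ = ENNReal.ofReal (∑' k : ℕ, ((α+1)*t)^(k+1) / ((k+1).factorial : ℝ) * Real.exp (-(1*t))) := by
          refine (ENNReal.ofReal_tsum_of_nonneg (fun k => ?_) hsummable).symm
          have h0 : (0:ℝ) ≤ (α+1)*t := by positivity
          positivity
      _ = ENNReal.ofReal ((Real.exp ((α+1)*t) - 1) * Real.exp (-(1*t))) := by rw [hval]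
  rw [lintegral_congr_ae hpt] at htsum
  -- final comparison
  have hd : (0:ℝ) < 1 - Real.exp (-(α+1)) := by
    have h1 : Real.exp (-(α+1)) < 1 := Real.exp_lt_one_iff.2 (by linarith)
    linarith
  have hptfin : ∀ t : ℝ, t ∈ Set.Ioi (1:ℝ) →
      ENNReal.ofReal (Real.exp (α * t)) ≤
        ENNReal.ofReal ((1 - Real.exp (-(α+1)))⁻¹)
          * ENNReal.ofReal ((Real.exp ((α+1)*t) - 1) * Real.exp (-(1*t))) := by
    intro t ht
    have ht' : (1:ℝ) < t := ht
    rw [← ENNReal.ofReal_mul (by positivity)]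
    apply ENNReal.ofReal_le_ofReal
    have h1 : Real.exp (-(1*t)) ≤ Real.exp (α*t) * Real.exp (-(α+1)) := by
      rw [← Real.exp_add]
      apply Real.exp_le_exp.2
      nlinarith
    have h2 : (Real.exp ((α+1)*t) - 1) * Real.exp (-(1*t))
        = Real.exp (α*t) - Real.exp (-(1*t)) := by
      have hadd : Real.exp ((α+1)*t) * Real.exp (-(1*t)) = Real.exp (α*t) := by
        rw [← Real.exp_add]; congr 1; ring
      rw [sub_mul, hadd, one_mul]
    rw [inv_mul_eq_div, le_div_iff₀ hd, h2]
    nlinarith [h1]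
  calc ∫⁻ t in Set.Ioi (1:ℝ), ENNReal.ofReal (Real.exp (α * t)) ∂ρ
      ≤ ∫⁻ t in Set.Ioi (1:ℝ),
          ENNReal.ofReal ((1 - Real.exp (-(α+1)))⁻¹)
            * ENNReal.ofReal ((Real.exp ((α+1)*t) - 1) * Real.exp (-(1*t))) ∂ρ := by
        apply lintegral_mono_ae
        filter_upwards [ae_restrict_mem measurableSet_Ioi] with t ht
        exact hptfin t ht
    _ = ENNReal.ofReal ((1 - Real.exp (-(α+1)))⁻¹)
          * ∫⁻ t in Set.Ioi (1:ℝ),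
            ENNReal.ofReal ((Real.exp ((α+1)*t) - 1) * Real.exp (-(1*t))) ∂ρ :=
        lintegral_const_mul' _ _ ENNReal.ofReal_ne_top
    _ ≤ ENNReal.ofReal ((1 - Real.exp (-(α+1)))⁻¹)
          * ∫⁻ t in Set.Ioi (0:ℝ),
            ENNReal.ofReal ((Real.exp ((α+1)*t) - 1) * Real.exp (-(1*t))) ∂ρ := by
        apply mul_le_mul_right
        exact lintegral_mono_set (fun t ht => lt_trans (by norm_num : (0:ℝ) < 1) ht)
    _ ≤ ENNReal.ofReal ((1 - Real.exp (-(α+1)))⁻¹) * ENNReal.ofReal M :=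
        mul_le_mul_right htsum _
    _ < ⊤ := ENNReal.mul_lt_top ENNReal.ofReal_lt_top ENNReal.ofReal_lt_top

end BernsteinAux

open BernsteinAux

/-- Exponential moment characterization of left extension of a Bernstein function:
`∫_{(1,∞)} e^{αt} ρ(dt) < ∞` iff `f` has an extension `g` onto `(-α, ∞)`, infinitely
differentiable there, with `(-1)^{k+1} g^{(k)} ≥ 0` for all `k ≥ 1`, and continuous up to
`-α` (i.e. with a finite limit as `x → -α⁺`). -/
theorem bernstein_exponential_moment_iff_smooth_extension
    (β : ℝ) (hβ : 0 ≤ β)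
    (ρ : Measure ℝ) (hρsupp : ρ (Set.Iic 0) = 0)
    (hρint : ∫⁻ t in Set.Ioi (0 : ℝ), ENNReal.ofReal (min t 1) ∂ρ < ⊤)
    (f : ℝ → ℝ)
    (hf : ∀ lam : ℝ, 0 < lam →
      f lam = β * lam + ∫ t in Set.Ioi (0 : ℝ), (1 - Real.exp (-lam * t)) ∂ρ)
    (α : ℝ) (hα : 0 < α) :
    (∫⁻ t in Set.Ioi (1 : ℝ), ENNReal.ofReal (Real.exp (α * t)) ∂ρ < ⊤) ↔
    (∃ g : ℝ → ℝ,
      ContDiffOn ℝ (⊤ : ℕ∞) g (Set.Ioi (-α)) ∧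
      (∀ lam : ℝ, 0 < lam → g lam = f lam) ∧
      (∀ k : ℕ, 1 ≤ k → ∀ x ∈ Set.Ioi (-α),
        0 ≤ (-1 : ℝ) ^ (k + 1) * iteratedDerivWithin k g (Set.Ioi (-α)) x) ∧
      ∃ L : ℝ, Filter.Tendsto g (nhdsWithin (-α) (Set.Ioi (-α))) (nhds L)) := by
  constructor
  · -- (b) → (c)
    intro hb
    have hMomα : Mom ρ (-α) := by
      unfold Mom
      have hsplit : Set.Ioi (0:ℝ) = Set.Ioc 0 1 ∪ Set.Ioi 1 :=
        (Set.Ioc_union_Ioi_eq_Ioi (by norm_num)).symm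
      rw [hsplit, lintegral_union measurableSet_Ioi (Set.Ioc_disjoint_Ioi le_rfl)]
      refine ENNReal.add_lt_top.2 ⟨?_, ?_⟩
      · calc ∫⁻ t in Set.Ioc (0:ℝ) 1, ENNReal.ofReal (min t 1 * Real.exp (-(-α * t))) ∂ρ
            ≤ ∫⁻ t in Set.Ioc (0:ℝ) 1,
              ENNReal.ofReal (Real.exp α) * ENNReal.ofReal (min t 1) ∂ρ := by
              apply lintegral_mono_ae
              filter_upwards [ae_restrict_mem measurableSet_Ioc] with t ht
              rw [← ENNReal.ofReal_mul (Real.exp_pos α).le]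
              apply ENNReal.ofReal_le_ofReal
              have h1 : Real.exp (-(-α * t)) ≤ Real.exp α := by
                apply Real.exp_le_exp.2
                nlinarith [ht.1, ht.2, hα]
              have h2 : (0:ℝ) ≤ min t 1 := le_min ht.1.le (by norm_num)
              nlinarith [Real.exp_pos (-(-α * t))]
          _ = ENNReal.ofReal (Real.exp α) *
              ∫⁻ t in Set.Ioc (0:ℝ) 1, ENNReal.ofReal (min t 1) ∂ρ :=
              lintegral_const_mul' _ _ ENNReal.ofReal_ne_top
          _ ≤ ENNReal.ofReal (Real.exp α) *
              ∫⁻ t in Set.Ioi (0:ℝ), ENNReal.ofReal (min t 1) ∂ρ :=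
              mul_le_mul_right (lintegral_mono_set (fun t ht => ht.1)) _
          _ < ⊤ := ENNReal.mul_lt_top ENNReal.ofReal_lt_top hρint
      · calc ∫⁻ t in Set.Ioi (1:ℝ), ENNReal.ofReal (min t 1 * Real.exp (-(-α * t))) ∂ρ
            ≤ ∫⁻ t in Set.Ioi (1:ℝ), ENNReal.ofReal (Real.exp (α * t)) ∂ρ := by
              apply lintegral_mono_ae
              filter_upwards [ae_restrict_mem measurableSet_Ioi] with t ht
              apply ENNReal.ofReal_le_ofReal
              have ht' : (1:ℝ) < t := ht
              rw [min_eq_right ht'.le, one_mul]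
              apply Real.exp_le_exp.2
              nlinarith
          _ < ⊤ := hb
    obtain ⟨hsmooth, hsign, hlim⟩ := forward_ex β hβ ρ hα hMomα
    refine ⟨fun x => β * x + G ρ x, hsmooth, ?_, hsign, hlim⟩
    intro lam hlam
    rw [hf lam hlam]
    simp only [G, neg_mul]
  · -- (c) → (b)
    rintro ⟨g, h1, h2, h3, L, hL⟩
    have hm0 : Mom ρ 0 := by
      unfold Mom
      simp only [zero_mul, neg_zero, Real.exp_zero, mul_one]
      exact hρint
    have hg_eq : Set.EqOn g (fun x => β * x + G ρ x) (Set.Ioi 0) := by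
      intro lam hlam
      rw [h2 lam hlam, hf lam hlam]
      simp only [G, neg_mul]
    exact reverse_ex β hβ ρ hα hm0 g h1 hg_eq h3 L hL
end

section
/- Let β ≥ 0, let ρ be a measure on (0,∞) with ∫_{(0,∞)} min(t,1) ρ(dt) < ∞, let α > 0, and assume ∫_{(1,∞)} e^{αt} ρ(dt) < ∞. Then for every ζ ∈ ℂ with Re ζ > −α the integral ∫_{(0,∞)} (1 − e^{−ζt}) ρ(dt) converges absolutely, and the function F(ζ) = βζ + ∫_{(0,∞)} (1 − e^{−ζt}) ρ(dt) is holomorphic on the half-plane {ζ ∈ ℂ : Re ζ > −α} and agrees on (0,∞) with the Bernstein function f(λ) = βλ + ∫_{(0,∞)} (1 − e^{−λt}) ρ(dt). -/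
open MeasureTheory

private lemma bhe_int_min (ρ : Measure ℝ)
    (hρint : ∫⁻ t in Set.Ioi (0 : ℝ), ENNReal.ofReal (min t 1) ∂ρ < ⊤) :
    Integrable (fun t => min t 1) (ρ.restrict (Set.Ioi 0)) := by
  refine ⟨(continuous_id.min continuous_const).aestronglyMeasurable, ?_⟩
  rw [hasFiniteIntegral_iff_norm]
  calc ∫⁻ t in Set.Ioi (0:ℝ), ENNReal.ofReal ‖min t 1‖ ∂ρ
      = ∫⁻ t in Set.Ioi (0:ℝ), ENNReal.ofReal (min t 1) ∂ρ := by
        refine lintegral_congr_ae ((ae_restrict_iff' measurableSet_Ioi).2 (ae_of_all _ ?_))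
        intro t ht
        simp only [Real.norm_eq_abs]; rw [abs_of_pos (lt_min ht one_pos)]
    _ < ⊤ := hρint

private lemma bhe_int_expInd (ρ : Measure ℝ) (α : ℝ)
    (hexp : ∫⁻ t in Set.Ioi (1 : ℝ), ENNReal.ofReal (Real.exp (α * t)) ∂ρ < ⊤) :
    Integrable (Set.indicator (Set.Ioi 1) fun t => Real.exp (α * t))
      (ρ.restrict (Set.Ioi 0)) := by
  rw [integrable_indicator_iff measurableSet_Ioi, IntegrableOn,
    Measure.restrict_restrict measurableSet_Ioi]
  have : Set.Ioi (1:ℝ) ∩ Set.Ioi 0 = Set.Ioi 1 := by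
    ext x; simp only [Set.mem_inter_iff, Set.mem_Ioi]
    exact ⟨fun h => h.1, fun h => ⟨h, lt_trans one_pos h⟩⟩
  rw [this]
  refine ⟨(Real.continuous_exp.comp (continuous_const.mul continuous_id)).aestronglyMeasurable, ?_⟩
  rw [hasFiniteIntegral_iff_norm]
  calc ∫⁻ t in Set.Ioi (1:ℝ), ENNReal.ofReal ‖Real.exp (α * t)‖ ∂ρ
      = ∫⁻ t in Set.Ioi (1:ℝ), ENNReal.ofReal (Real.exp (α * t)) ∂ρ := by
        apply lintegral_congr fun t => ?_
        simp [Real.norm_eq_abs, abs_of_pos (Real.exp_pos _)]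
    _ < ⊤ := hexp

private lemma bhe_bound_small (ζ : ℂ) (t : ℝ) (ht : 0 < t) (ht1 : t ≤ 1) :
    ‖1 - Complex.exp (-(ζ * t))‖ ≤ (3 + Real.exp ‖ζ‖) * ‖ζ‖ * t := by
  have hnz : ‖-(ζ * t)‖ = ‖ζ‖ * t := by
    rw [norm_neg, norm_mul, Complex.norm_real, Real.norm_eq_abs, abs_of_pos ht]
  rcases le_or_gt (‖ζ‖ * t) 1 with h | h
  · have := Complex.norm_exp_sub_one_le (x := -(ζ * t)) (by rwa [hnz])
    rw [← norm_neg, neg_sub] at this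
    rw [hnz] at this
    calc ‖1 - Complex.exp (-(ζ*t))‖ ≤ 2 * (‖ζ‖ * t) := this
      _ ≤ (3 + Real.exp ‖ζ‖) * ‖ζ‖ * t := by
        nlinarith [mul_nonneg (norm_nonneg ζ) ht.le, (Real.exp_pos ‖ζ‖).le,
          mul_nonneg (mul_nonneg (Real.exp_pos ‖ζ‖).le (norm_nonneg ζ)) ht.le]
  · have h1 : ‖1 - Complex.exp (-(ζ*t))‖ ≤ 1 + Real.exp ‖ζ‖ := by
      calc ‖1 - Complex.exp (-(ζ*t))‖ ≤ ‖(1:ℂ)‖ + ‖Complex.exp (-(ζ*t))‖ := norm_sub_le _ _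
        _ = 1 + Real.exp (-(ζ*t)).re := by rw [norm_one, Complex.norm_exp]
        _ ≤ 1 + Real.exp ‖ζ‖ := by
            gcongr
            calc (-(ζ*t)).re ≤ ‖-(ζ*t)‖ := Complex.re_le_norm _
              _ = ‖ζ‖ * t := hnz
              _ ≤ ‖ζ‖ * 1 := by gcongr
              _ = ‖ζ‖ := mul_one _
    calc ‖1 - Complex.exp (-(ζ*t))‖ ≤ 1 + Real.exp ‖ζ‖ := h1
      _ ≤ (1 + Real.exp ‖ζ‖) * (‖ζ‖ * t) := le_mul_of_one_le_right (by positivity) h.le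
      _ ≤ (3 + Real.exp ‖ζ‖) * ‖ζ‖ * t := by
        nlinarith [mul_nonneg (norm_nonneg ζ) ht.le, (Real.exp_pos ‖ζ‖).le,
          mul_nonneg (mul_nonneg (Real.exp_pos ‖ζ‖).le (norm_nonneg ζ)) ht.le]

private lemma bhe_bound_large (ζ : ℂ) (α : ℝ) (hα : 0 < α) (hζ : -α ≤ ζ.re)
    (t : ℝ) (ht : 1 < t) :
    ‖1 - Complex.exp (-(ζ * t))‖ ≤ 2 * Real.exp (α * t) := by
  have ht0 : (0:ℝ) < t := lt_trans one_pos ht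
  calc ‖1 - Complex.exp (-(ζ*t))‖ ≤ ‖(1:ℂ)‖ + ‖Complex.exp (-(ζ*t))‖ := norm_sub_le _ _
    _ = 1 + Real.exp ((-(ζ*t)).re) := by rw [norm_one, Complex.norm_exp]
    _ ≤ Real.exp (α*t) + Real.exp (α*t) := by
        gcongr
        · calc (1:ℝ) = Real.exp 0 := (Real.exp_zero).symm
            _ ≤ Real.exp (α*t) := Real.exp_le_exp.2 (by positivity)
        · have h2 : (-(ζ*(t:ℂ))).re = -(ζ.re * t) := by
            simp [Complex.mul_re]
          rw [h2]; nlinarith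
    _ = 2 * Real.exp (α*t) := by ring

private lemma bhe_hasDerivAt (ζ : ℂ) (t : ℝ) :
    HasDerivAt (fun z : ℂ => 1 - Complex.exp (-(z * t)))
      ((t : ℂ) * Complex.exp (-(ζ * t))) ζ := by
  have h1 : HasDerivAt (fun z : ℂ => -(z * t)) (-(t:ℂ)) ζ := by
    exact ((hasDerivAt_id ζ).mul_const (t:ℂ)).neg.congr_deriv (by simp)
  have h2 := (h1.cexp).const_sub 1
  exact h2.congr_deriv (by ring)

private lemma bhe_dbound_small (ζ : ℂ) (M : ℝ) (hM : ‖ζ‖ ≤ M) (t : ℝ)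
    (ht : 0 < t) (ht1 : t ≤ 1) :
    ‖(t:ℂ) * Complex.exp (-(ζ * t))‖ ≤ Real.exp M * t := by
  rw [norm_mul, Complex.norm_real, Real.norm_eq_abs, abs_of_pos ht,
    Complex.norm_exp]
  rw [mul_comm]
  gcongr
  calc (-(ζ*(t:ℂ))).re ≤ ‖-(ζ*(t:ℂ))‖ := Complex.re_le_norm _
    _ = ‖ζ‖ * t := by rw [norm_neg, norm_mul, Complex.norm_real, Real.norm_eq_abs, abs_of_pos ht]
    _ ≤ M * 1 := by gcongr; exact (norm_nonneg ζ).trans hM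
    _ = M := mul_one M

private lemma bhe_dbound_large (ζ : ℂ) (α ε : ℝ) (hε : 0 < ε) (hζ : -α + ε ≤ ζ.re)
    (t : ℝ) (ht : 1 < t) :
    ‖(t:ℂ) * Complex.exp (-(ζ * t))‖ ≤ (1/ε) * Real.exp (α * t) := by
  have ht0 : (0:ℝ) < t := lt_trans one_pos ht
  have hre : (-(ζ*(t:ℂ))).re = -(ζ.re * t) := by simp [Complex.mul_re]
  rw [norm_mul, Complex.norm_real, Real.norm_eq_abs, abs_of_pos ht0,
    Complex.norm_exp, hre]
  have h1 : t ≤ Real.exp (ε*t) / ε := by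
    rw [le_div_iff₀ hε, mul_comm]
    exact le_trans (by linarith) (Real.add_one_le_exp (ε*t))
  calc t * Real.exp (-(ζ.re*t)) ≤ (Real.exp (ε*t)/ε) * Real.exp ((α-ε)*t) := by
        apply mul_le_mul h1 (Real.exp_le_exp.2 (by nlinarith)) (Real.exp_pos _).le
        positivity
    _ = (1/ε) * Real.exp (α*t) := by
        rw [div_mul_eq_mul_div, ← Real.exp_add, one_div, div_eq_inv_mul]
        ring_nf

/-- If the Lévy measure `ρ` of a Bernstein function has a finite exponential moment of order
`α > 0`, then the defining integral converges absolutely for every `ζ ∈ ℂ` with `Re ζ > -α`,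
and `F(ζ) = βζ + ∫ (1 - e^{-ζt}) ρ(dt)` is holomorphic on the half-plane `{Re ζ > -α}` and
agrees with the Bernstein function `f` on `(0, ∞)`. -/
theorem bernstein_holomorphic_extension
    (β : ℝ) (hβ : 0 ≤ β)
    (ρ : Measure ℝ) (hρsupp : ρ (Set.Iic 0) = 0)
    (hρint : ∫⁻ t in Set.Ioi (0 : ℝ), ENNReal.ofReal (min t 1) ∂ρ < ⊤)
    (α : ℝ) (hα : 0 < α)
    (hexp : ∫⁻ t in Set.Ioi (1 : ℝ), ENNReal.ofReal (Real.exp (α * t)) ∂ρ < ⊤) :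
    (∀ ζ : ℂ, -α < ζ.re →
      Integrable (fun t : ℝ => 1 - Complex.exp (-(ζ * t))) (ρ.restrict (Set.Ioi 0))) ∧
    DifferentiableOn ℂ
      (fun ζ : ℂ => (β : ℂ) * ζ + ∫ t in Set.Ioi (0 : ℝ), (1 - Complex.exp (-(ζ * t))) ∂ρ)
      {ζ : ℂ | -α < ζ.re} ∧
    ∀ lam : ℝ, 0 < lam →
      (β : ℂ) * (lam : ℂ) + ∫ t in Set.Ioi (0 : ℝ), (1 - Complex.exp (-((lam : ℂ) * t))) ∂ρ
        = ((β * lam + ∫ t in Set.Ioi (0 : ℝ), (1 - Real.exp (-lam * t)) ∂ρ : ℝ) : ℂ) := by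
  have hmin := bhe_int_min ρ hρint
  have hind := bhe_int_expInd ρ α hexp
  -- Part 1 : integrability
  have key : ∀ ζ : ℂ, -α < ζ.re →
      Integrable (fun t : ℝ => 1 - Complex.exp (-(ζ * t))) (ρ.restrict (Set.Ioi 0)) := by
    intro ζ hζ
    have hmeas : AEStronglyMeasurable (fun t : ℝ => 1 - Complex.exp (-(ζ * t)))
        (ρ.restrict (Set.Ioi 0)) :=
      (continuous_const.sub (Complex.continuous_exp.comp
        ((continuous_const.mul Complex.continuous_ofReal).neg))).aestronglyMeasurable
    refine Integrable.mono'
      ((hmin.const_mul ((3 + Real.exp ‖ζ‖) * ‖ζ‖)).add (hind.const_mul 2)) hmeas ?_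
    refine (ae_restrict_iff' measurableSet_Ioi).2 (ae_of_all _ fun t ht => ?_)
    have hindnn : ∀ s : ℝ, 0 ≤ Set.indicator (Set.Ioi 1) (fun u => Real.exp (α * u)) s :=
      fun s => Set.indicator_nonneg (fun u _ => (Real.exp_pos _).le) s
    rcases le_or_gt t 1 with h1 | h1
    · have hb := bhe_bound_small ζ t ht h1
      have hm : min t 1 = t := min_eq_left h1
      have : (3 + Real.exp ‖ζ‖) * ‖ζ‖ * min t 1 = (3 + Real.exp ‖ζ‖) * ‖ζ‖ * t := by rw [hm]
      calc ‖1 - Complex.exp (-(ζ * t))‖ ≤ (3 + Real.exp ‖ζ‖) * ‖ζ‖ * min t 1 := by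
            rw [this]; exact hb
        _ ≤ (3 + Real.exp ‖ζ‖) * ‖ζ‖ * min t 1
            + 2 * Set.indicator (Set.Ioi 1) (fun u => Real.exp (α * u)) t := by
            have := hindnn t; linarith
    · have hb := bhe_bound_large ζ α hα hζ.le t h1
      have hi : Set.indicator (Set.Ioi 1) (fun u => Real.exp (α * u)) t = Real.exp (α * t) :=
        Set.indicator_of_mem h1 _
      have hmn : 0 ≤ (3 + Real.exp ‖ζ‖) * ‖ζ‖ * min t 1 := by
        have : (0:ℝ) ≤ min t 1 := le_min ht.le one_pos.le
        positivity
      calc ‖1 - Complex.exp (-(ζ * t))‖ ≤ 2 * Real.exp (α * t) := hb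
        _ ≤ (3 + Real.exp ‖ζ‖) * ‖ζ‖ * min t 1
            + 2 * Set.indicator (Set.Ioi 1) (fun u => Real.exp (α * u)) t := by
            rw [hi]; linarith
  refine ⟨key, ?_, ?_⟩
  · -- Part 2 : holomorphy
    intro ζ₀ hζ₀
    apply DifferentiableAt.differentiableWithinAt
    have hζ₀' : -α < ζ₀.re := hζ₀
    set ε : ℝ := (ζ₀.re + α) / 2 with hεdef
    have hε : 0 < ε := by simp only [hεdef]; linarith
    set M : ℝ := ‖ζ₀‖ + ε with hMdef
    have hder : HasDerivAt
        (fun ζ : ℂ => ∫ t in Set.Ioi (0:ℝ), (1 - Complex.exp (-(ζ * t))) ∂ρ)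
        (∫ t in Set.Ioi (0:ℝ), ((t:ℂ) * Complex.exp (-(ζ₀ * t))) ∂ρ) ζ₀ := by
      refine (hasDerivAt_integral_of_dominated_loc_of_deriv_le (F := fun ζ (t:ℝ) =>
          1 - Complex.exp (-(ζ * t))) (F' := fun ζ (t:ℝ) => (t:ℂ) * Complex.exp (-(ζ * t)))
          (bound := fun t => Real.exp M * min t 1
            + (1/ε) * Set.indicator (Set.Ioi 1) (fun u => Real.exp (α * u)) t)
          (Metric.ball_mem_nhds ζ₀ hε) ?_ (key ζ₀ hζ₀') ?_ ?_ ?_ ?_).2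
      · exact Filter.Eventually.of_forall fun ζ =>
          (continuous_const.sub (Complex.continuous_exp.comp
            ((continuous_const.mul Complex.continuous_ofReal).neg))).aestronglyMeasurable
      · exact (Complex.continuous_ofReal.mul (Complex.continuous_exp.comp
          ((continuous_const.mul Complex.continuous_ofReal).neg))).aestronglyMeasurable
      · refine (ae_restrict_iff' measurableSet_Ioi).2 (ae_of_all _ fun t ht ζ hζmem => ?_)
        have hnle : ‖ζ‖ ≤ M := by
          have : ‖ζ - ζ₀‖ < ε := by rwa [Metric.mem_ball, dist_eq_norm] at hζmem
          calc ‖ζ‖ = ‖ζ₀ + (ζ - ζ₀)‖ := by ring_nf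
            _ ≤ ‖ζ₀‖ + ‖ζ - ζ₀‖ := norm_add_le _ _
            _ ≤ M := by rw [hMdef]; linarith
        have hre : -α + ε ≤ ζ.re := by
          have h2 : |(ζ - ζ₀).re| ≤ ‖ζ - ζ₀‖ := Complex.abs_re_le_norm _
          have h3 : ‖ζ - ζ₀‖ < ε := by rwa [Metric.mem_ball, dist_eq_norm] at hζmem
          have h4 : |(ζ - ζ₀).re| < ε := lt_of_le_of_lt h2 h3
          rw [Complex.sub_re, abs_lt] at h4
          simp only [hεdef]; linarith [h4.1]
        have hindnn : 0 ≤ Set.indicator (Set.Ioi 1) (fun u => Real.exp (α * u)) t :=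
          Set.indicator_nonneg (fun u _ => (Real.exp_pos _).le) t
        rcases le_or_gt t 1 with h1 | h1
        · have hb := bhe_dbound_small ζ M hnle t ht h1
          have hm : min t 1 = t := min_eq_left h1
          calc ‖(t:ℂ) * Complex.exp (-(ζ * t))‖ ≤ Real.exp M * min t 1 := by rw [hm]; exact hb
            _ ≤ _ := by
              have h5 : 0 ≤ (1/ε) * Set.indicator (Set.Ioi 1) (fun u => Real.exp (α * u)) t :=
                mul_nonneg (by positivity) hindnn
              linarith
        · have hb := bhe_dbound_large ζ α ε hε hre t h1
          have hi : Set.indicator (Set.Ioi 1) (fun u => Real.exp (α * u)) t = Real.exp (α * t) :=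
            Set.indicator_of_mem h1 _
          have hmn : 0 ≤ Real.exp M * min t 1 := by
            have : (0:ℝ) ≤ min t 1 := le_min ht.le one_pos.le
            positivity
          calc ‖(t:ℂ) * Complex.exp (-(ζ * t))‖ ≤ (1/ε) * Real.exp (α * t) := hb
            _ ≤ _ := by simp only [hi]; linarith
      · exact (hmin.const_mul (Real.exp M)).add (hind.const_mul (1/ε))
      · exact ae_of_all _ fun t ζ _ => bhe_hasDerivAt ζ t
    have h6 : DifferentiableAt ℂ (fun ζ : ℂ => (β:ℂ) * ζ) ζ₀ :=
      differentiableAt_id.const_mul _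
    exact h6.add hder.differentiableAt
  · -- Part 3 : agreement on (0,∞)
    intro lam hlam
    have h1 : ∀ t : ℝ, (1 : ℂ) - Complex.exp (-((lam:ℂ) * t))
        = ((1 - Real.exp (-lam * t) : ℝ) : ℂ) := by
      intro t
      rw [Complex.ofReal_sub, Complex.ofReal_one, Complex.ofReal_exp]
      congr 2
      push_cast
      ring
    rw [Complex.ofReal_add, Complex.ofReal_mul]
    congr 1
    simp_rw [h1]
    exact integral_ofReal
end

section
/- Let β ≥ 0 and let ρ be a measure on (0,∞) with ∫_{(0,∞)} min(t,1) ρ(dt) < ∞, and define the Bernstein function f(λ) = βλ + ∫_{(0,∞)} (1 − e^{−λt}) ρ(dt) on (0,∞). Let α > 0 and suppose g : (−α,∞) → ℝ is real-analytic and g = f on (0,∞). Then (−1)^{k+1} g^{(k)}(x) ≥ 0 for every integer k ≥ 1 and every x ∈ (−α,∞). -/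
open MeasureTheory

/- ### Auxiliary lemmas -/

lemma aux_pow_exp_bound (m : ℕ) (hm : 1 ≤ m) {c t : ℝ} (hc : 0 < c) (ht : 0 < t) :
    t ^ m * Real.exp (-(c * t)) ≤ max 1 (m.factorial * (2 / c) ^ m) * min t 1 := by
  rcases le_total t 1 with h1 | h1
  · have hmin : min t 1 = t := min_eq_left h1
    rw [hmin]
    calc t ^ m * Real.exp (-(c * t)) ≤ t ^ m * 1 :=
          mul_le_mul_of_nonneg_left (Real.exp_le_one_iff.2 (by nlinarith)) (by positivity)
      _ = t ^ m := mul_one _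
      _ ≤ t ^ 1 := pow_le_pow_of_le_one ht.le h1 hm
      _ = 1 * t := by ring
      _ ≤ max 1 (m.factorial * (2 / c) ^ m) * t :=
          mul_le_mul_of_nonneg_right (le_max_left _ _) ht.le
  · have hmin : min t 1 = 1 := min_eq_right h1
    rw [hmin, mul_one]
    have key : t ^ m ≤ m.factorial * (2 / c) ^ m * Real.exp (c * t / 2) := by
      have h0 := Real.pow_div_factorial_le_exp (x := c * t / 2) (by positivity) m
      rw [div_le_iff₀ (by positivity)] at h0
      have e1 : t ^ m = (2 / c) ^ m * (c * t / 2) ^ m := by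
        rw [← mul_pow]; congr 1; field_simp
      calc t ^ m = (2 / c) ^ m * (c * t / 2) ^ m := e1
        _ ≤ (2 / c) ^ m * (Real.exp (c * t / 2) * m.factorial) :=
            mul_le_mul_of_nonneg_left h0 (by positivity)
        _ = m.factorial * (2 / c) ^ m * Real.exp (c * t / 2) := by ring
    calc t ^ m * Real.exp (-(c * t))
        ≤ (m.factorial * (2 / c) ^ m * Real.exp (c * t / 2)) * Real.exp (-(c * t)) :=
          mul_le_mul_of_nonneg_right key (Real.exp_pos _).le
      _ = m.factorial * (2 / c) ^ m * Real.exp (c * t / 2 + -(c * t)) := by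
          rw [Real.exp_add]; ring
      _ ≤ m.factorial * (2 / c) ^ m * 1 :=
          mul_le_mul_of_nonneg_left (Real.exp_le_one_iff.2 (by nlinarith)) (by positivity)
      _ ≤ max 1 (m.factorial * (2 / c) ^ m) := by rw [mul_one]; exact le_max_right _ _

section Integrals

variable (μ : Measure ℝ)

lemma aux_int_pow (hae : ∀ᵐ t ∂μ, 0 < t) (hmin : Integrable (fun t => min t 1) μ)
    (m : ℕ) (hm : 1 ≤ m) {c : ℝ} (hc : 0 < c) :
    Integrable (fun t => t ^ m * Real.exp (-(c * t))) μ := by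
  refine Integrable.mono' (hmin.const_mul (max 1 (m.factorial * (2 / c) ^ m))) ?_ ?_
  · exact (Continuous.aestronglyMeasurable (by fun_prop))
  · filter_upwards [hae] with t ht
    rw [Real.norm_eq_abs, abs_of_nonneg (by positivity)]
    exact aux_pow_exp_bound m hm hc ht

lemma aux_hasDerivAt_pow (hae : ∀ᵐ t ∂μ, 0 < t) (hmin : Integrable (fun t => min t 1) μ)
    (m : ℕ) (hm : 1 ≤ m) {c : ℝ} (hc : 0 < c) :
    HasDerivAt (fun lam => ∫ t, t ^ m * Real.exp (-(lam * t)) ∂μ)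
      (-∫ t, t ^ (m + 1) * Real.exp (-(c * t)) ∂μ) c := by
  have key := hasDerivAt_integral_of_dominated_loc_of_deriv_le
    (F := fun lam t => t ^ m * Real.exp (-(lam * t)))
    (F' := fun lam t => -(t ^ (m + 1) * Real.exp (-(lam * t))))
    (x₀ := c) (s := Metric.ball c (c / 2))
    (bound := fun t => max 1 ((m + 1).factorial * (2 / (c / 2)) ^ (m + 1)) * min t 1)
    (μ := μ) (Metric.ball_mem_nhds c (half_pos hc))
    (Filter.Eventually.of_forall fun x => (Continuous.aestronglyMeasurable (by fun_prop)))
    (aux_int_pow μ hae hmin m hm hc)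
    (Continuous.aestronglyMeasurable (by fun_prop))
    ?_ (hmin.const_mul _) ?_
  · have := key.2
    rwa [integral_neg] at this
  · filter_upwards [hae] with t ht
    intro x hx
    have hx2 : c / 2 ≤ x := by
      have := abs_lt.1 (mem_ball_iff_norm.1 hx)
      linarith [this.1]
    rw [norm_neg, Real.norm_eq_abs, abs_of_nonneg (by positivity)]
    calc t ^ (m + 1) * Real.exp (-(x * t))
        ≤ t ^ (m + 1) * Real.exp (-(c / 2 * t)) := by
          apply mul_le_mul_of_nonneg_left (Real.exp_le_exp.2 (by nlinarith)) (by positivity)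
      _ ≤ _ := aux_pow_exp_bound (m + 1) (by omega) (half_pos hc) ht
  · apply Filter.Eventually.of_forall
    intro t x _
    have h1 : HasDerivAt (fun lam : ℝ => -(lam * t)) (-t) x := by
      exact (((hasDerivAt_id x).mul_const t).neg).congr_deriv (by ring)
    have h3 := (h1.exp).const_mul (t ^ m)
    convert h3 using 1
    case e'_4 => rfl
    show -(t ^ (m + 1) * Real.exp (-(x * t))) = t ^ m * (Real.exp (-(x * t)) * -t)
    rw [pow_succ]; ring

lemma aux_hasDerivAt_F0 (hae : ∀ᵐ t ∂μ, 0 < t) (hmin : Integrable (fun t => min t 1) μ)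
    {c : ℝ} (hc : 0 < c) :
    HasDerivAt (fun lam => ∫ t, (1 - Real.exp (-(lam * t))) ∂μ)
      (∫ t, t ^ 1 * Real.exp (-(c * t)) ∂μ) c := by
  have hint : Integrable (fun t => 1 - Real.exp (-(c * t))) μ := by
    refine Integrable.mono' (hmin.const_mul (max c 1)) ?_ ?_
    · exact (Continuous.aestronglyMeasurable (by fun_prop))
    · filter_upwards [hae] with t ht
      have he1 : Real.exp (-(c * t)) ≤ 1 := Real.exp_le_one_iff.2 (by nlinarith)
      have he2 : 1 - Real.exp (-(c * t)) ≤ c * t := by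
        have := Real.add_one_le_exp (-(c * t))
        linarith
      rw [Real.norm_eq_abs, abs_of_nonneg (by linarith)]
      rcases le_total t 1 with h1 | h1
      · rw [min_eq_left h1]
        calc 1 - Real.exp (-(c * t)) ≤ c * t := he2
          _ ≤ max c 1 * t := mul_le_mul_of_nonneg_right (le_max_left _ _) ht.le
      · rw [min_eq_right h1]
        calc 1 - Real.exp (-(c * t)) ≤ 1 := by linarith [Real.exp_pos (-(c * t))]
          _ ≤ max c 1 * 1 := by rw [mul_one]; exact le_max_right _ _
  have key := hasDerivAt_integral_of_dominated_loc_of_deriv_le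
    (F := fun lam t => 1 - Real.exp (-(lam * t)))
    (F' := fun lam t => t ^ 1 * Real.exp (-(lam * t)))
    (x₀ := c) (s := Metric.ball c (c / 2))
    (bound := fun t => max 1 ((1 : ℕ).factorial * (2 / (c / 2)) ^ 1) * min t 1)
    (μ := μ) (Metric.ball_mem_nhds c (half_pos hc))
    (Filter.Eventually.of_forall fun x => (Continuous.aestronglyMeasurable (by fun_prop)))
    hint
    (Continuous.aestronglyMeasurable (by fun_prop))
    ?_ (hmin.const_mul _) ?_
  · exact key.2
  · filter_upwards [hae] with t ht
    intro x hx
    have hx2 : c / 2 ≤ x := by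
      have := abs_lt.1 (mem_ball_iff_norm.1 hx)
      linarith [this.1]
    rw [Real.norm_eq_abs, abs_of_nonneg (by positivity)]
    calc t ^ 1 * Real.exp (-(x * t))
        ≤ t ^ 1 * Real.exp (-(c / 2 * t)) := by
          apply mul_le_mul_of_nonneg_left (Real.exp_le_exp.2 (by nlinarith)) (by positivity)
      _ ≤ _ := aux_pow_exp_bound 1 le_rfl (half_pos hc) ht
  · apply Filter.Eventually.of_forall
    intro t x _
    have h1 : HasDerivAt (fun lam : ℝ => -(lam * t)) (-t) x := by
      exact (((hasDerivAt_id x).mul_const t).neg).congr_deriv (by ring)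
    have h3 := (hasDerivAt_const x (1 : ℝ)).sub h1.exp
    convert h3 using 1
    case e'_8 => rfl
    show t ^ 1 * Real.exp (-(x * t)) = 0 - Real.exp (-(x * t)) * -t
    ring

end Integrals

/- ### Taylor expansion lemmas for analytic functions -/

lemma aux_deriv_ball {f : ℝ → ℝ} {p : FormalMultilinearSeries ℝ ℝ ℝ} {c : ℝ} {r : ENNReal}
    (h : HasFPowerSeriesOnBall f p c r) :
    ∃ q : FormalMultilinearSeries ℝ ℝ ℝ, HasFPowerSeriesOnBall (deriv f) q c r := by
  let L : (ℝ →L[ℝ] ℝ) →L[ℝ] ℝ := ContinuousLinearMap.apply ℝ ℝ (1 : ℝ)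
  refine ⟨L.compFormalMultilinearSeries p.derivSeries, ?_⟩
  have h2 := L.comp_hasFPowerSeriesOnBall h.fderiv
  have he : (L ∘ fderiv ℝ f) = deriv f := by
    funext x
    simp only [Function.comp_apply, L, ContinuousLinearMap.apply_apply]
    exact fderiv_apply_one_eq_deriv
  rwa [he] at h2

lemma aux_iterate_ball {f : ℝ → ℝ} {p : FormalMultilinearSeries ℝ ℝ ℝ} {c : ℝ} {r : ENNReal}
    (h : HasFPowerSeriesOnBall f p c r) (n : ℕ) :
    ∃ q : FormalMultilinearSeries ℝ ℝ ℝ, HasFPowerSeriesOnBall (deriv^[n] f) q c r := by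
  induction n with
  | zero => exact ⟨p, h⟩
  | succ n ih =>
    obtain ⟨q, hq⟩ := ih
    obtain ⟨q', hq'⟩ := aux_deriv_ball hq
    exact ⟨q', by rwa [Function.iterate_succ_apply']⟩

lemma aux_taylor_hasSum {g : ℝ → ℝ} {p : FormalMultilinearSeries ℝ ℝ ℝ} {c : ℝ} {r : ENNReal}
    (h : HasFPowerSeriesOnBall g p c r) (n : ℕ) {y : ℝ} (hy : (‖y‖₊ : ENNReal) < r) :
    HasSum (fun m : ℕ => (m.factorial : ℝ)⁻¹ * (y ^ m * iteratedDeriv (n + m) g c))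
      (iteratedDeriv n g (c + y)) := by
  obtain ⟨q, hq⟩ := aux_iterate_ball h n
  have hy' : y ∈ Metric.eball (0 : ℝ) r := by
    rw [Metric.mem_eball, edist_zero_right]; exact hy
  have h1 := hq.hasSum_iteratedFDeriv hy'
  have hterm : ∀ m : ℕ, (m.factorial : ℝ)⁻¹ • iteratedFDeriv ℝ m (deriv^[n] g) c (fun _ => y)
      = (m.factorial : ℝ)⁻¹ * (y ^ m * iteratedDeriv (n + m) g c) := by
    intro m
    rw [iteratedFDeriv_apply_eq_iteratedDeriv_mul_prod]
    have h3 : iteratedDeriv m (deriv^[n] g) c = iteratedDeriv (n + m) g c := by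
      rw [iteratedDeriv_eq_iterate, iteratedDeriv_eq_iterate, ← Function.iterate_add_apply,
        add_comm]
    rw [h3]
    simp [smul_eq_mul]
  have h4 : deriv^[n] g (c + y) = iteratedDeriv n g (c + y) := by
    rw [iteratedDeriv_eq_iterate]
  rw [← h4]
  convert h1 using 1
  case e'_3 => rfl
  funext m
  exact (hterm m).symm

/-- The derivative sign conditions of a Bernstein function propagate to any real-analytic
extension to the left of `0`: if `g` is real-analytic on `(-α, ∞)` and agrees with the
Bernstein function `f` on `(0, ∞)`, then `(-1)^{k+1} g^{(k)}(x) ≥ 0` for all `k ≥ 1` and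
all `x ∈ (-α, ∞)`. -/
theorem bernstein_analytic_extension_sign_conditions
    (β : ℝ) (hβ : 0 ≤ β)
    (ρ : Measure ℝ) (hρsupp : ρ (Set.Iic 0) = 0)
    (hρint : ∫⁻ t in Set.Ioi (0 : ℝ), ENNReal.ofReal (min t 1) ∂ρ < ⊤)
    (f : ℝ → ℝ)
    (hf : ∀ lam : ℝ, 0 < lam →
      f lam = β * lam + ∫ t in Set.Ioi (0 : ℝ), (1 - Real.exp (-lam * t)) ∂ρ)
    (α : ℝ) (hα : 0 < α)
    (g : ℝ → ℝ)
    (hg : AnalyticOnNhd ℝ g (Set.Ioi (-α)))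
    (hgf : ∀ lam : ℝ, 0 < lam → g lam = f lam) :
    ∀ k : ℕ, 1 ≤ k → ∀ x ∈ Set.Ioi (-α), 0 ≤ (-1 : ℝ) ^ (k + 1) * iteratedDeriv k g x := by
  set μ : Measure ℝ := ρ.restrict (Set.Ioi 0) with hμ
  have hae : ∀ᵐ t ∂μ, 0 < t := by
    have := ae_restrict_mem (μ := ρ) (measurableSet_Ioi (a := (0 : ℝ)))
    exact this.mono fun t ht => ht
  have hmin : Integrable (fun t => min t 1) μ := by
    constructor
    · exact (continuous_id.min continuous_const).aestronglyMeasurable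
    · rw [hasFiniteIntegral_iff_ofReal]
      · exact hρint
      · filter_upwards [hae] with t ht
        exact le_min ht.le zero_le_one
  have hDnonneg : ∀ (m : ℕ) (lam : ℝ), 0 ≤ ∫ t, t ^ m * Real.exp (-(lam * t)) ∂μ := by
    intro m lam
    apply integral_nonneg_of_ae
    filter_upwards [hae] with t ht
    positivity
  -- Step A : formula for the iterated derivatives of `g` on `(0, ∞)`
  have hiter : ∀ k : ℕ, 1 ≤ k → ∀ lam : ℝ, 0 < lam →
      iteratedDeriv k g lam
        = (if k = 1 then β else 0)
          + (-1 : ℝ) ^ (k + 1) * ∫ t, t ^ k * Real.exp (-(lam * t)) ∂μ := by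
    intro k hk
    induction k, hk using Nat.le_induction with
    | base =>
      intro lam hlam
      have hev : g =ᶠ[nhds lam]
          fun x => β * x + ∫ t, (1 - Real.exp (-(x * t))) ∂μ := by
        filter_upwards [isOpen_Ioi.mem_nhds hlam] with x hx
        rw [hgf x hx, hf x hx, hμ]
        simp only [neg_mul]
      have hd : HasDerivAt (fun x => β * x + ∫ t, (1 - Real.exp (-(x * t))) ∂μ)
          (β + ∫ t, t ^ 1 * Real.exp (-(lam * t)) ∂μ) lam := by
        have h1 : HasDerivAt (fun x : ℝ => β * x) β lam := by
          simpa using (hasDerivAt_id lam).const_mul β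
        exact h1.add (aux_hasDerivAt_F0 μ hae hmin hlam)
      have hd2 : HasDerivAt g (β + ∫ t, t ^ 1 * Real.exp (-(lam * t)) ∂μ) lam :=
        hd.congr_of_eventuallyEq hev
      rw [iteratedDeriv_one, hd2.deriv]
      norm_num
    | succ k hk ih =>
      intro lam hlam
      have hev : iteratedDeriv k g =ᶠ[nhds lam]
          fun x => (if k = 1 then β else 0)
            + (-1 : ℝ) ^ (k + 1) * ∫ t, t ^ k * Real.exp (-(x * t)) ∂μ := by
        filter_upwards [isOpen_Ioi.mem_nhds hlam] with x hx
        exact ih x hx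
      have hd : HasDerivAt
          (fun x => (if k = 1 then β else 0)
            + (-1 : ℝ) ^ (k + 1) * ∫ t, t ^ k * Real.exp (-(x * t)) ∂μ)
          ((-1 : ℝ) ^ (k + 1) * (-∫ t, t ^ (k + 1) * Real.exp (-(lam * t)) ∂μ)) lam := by
        have h2 := (aux_hasDerivAt_pow μ hae hmin k hk hlam).const_mul ((-1 : ℝ) ^ (k + 1))
        exact ((hasDerivAt_const lam (if k = 1 then β else 0)).add h2).congr_deriv (by ring)
      have hd2 := hd.congr_of_eventuallyEq hev
      rw [iteratedDeriv_succ, hd2.deriv]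
      have hne : k + 1 ≠ 1 := by omega
      rw [if_neg hne]
      rw [pow_succ ((-1 : ℝ)) (k + 1)]
      ring
  -- sign conditions on `(0, ∞)`
  have hsign_pos : ∀ x : ℝ, 0 < x → ∀ n : ℕ, 1 ≤ n →
      0 ≤ (-1 : ℝ) ^ (n + 1) * iteratedDeriv n g x := by
    intro x hx n hn
    rw [hiter n hn x hx]
    have hD := hDnonneg n x
    have h1 : ((-1 : ℝ) ^ (n + 1)) * ((-1 : ℝ) ^ (n + 1)) = 1 := by
      rw [← pow_add]
      exact Even.neg_one_pow ⟨n + 1, by ring⟩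
    by_cases hn1 : n = 1
    · subst hn1
      rw [if_pos rfl]
      norm_num
      have hD' : 0 ≤ ∫ t, t * Real.exp (-(x * t)) ∂μ := by
        simpa using hDnonneg 1 x
      linarith
    · rw [if_neg hn1, zero_add, ← mul_assoc, h1, one_mul]
      exact hD
  -- analyticity of the iterated derivatives
  have hgan : ∀ n : ℕ, AnalyticOnNhd ℝ (iteratedDeriv n g) (Set.Ioi (-α)) := by
    intro n
    induction n with
    | zero => simpa [iteratedDeriv_zero] using hg
    | succ n ih =>
      rw [iteratedDeriv_succ]
      exact ih.deriv
  -- Step B : leftward propagation of the sign conditions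
  set P : ℝ → Prop :=
    fun x => ∀ n : ℕ, 1 ≤ n → 0 ≤ (-1 : ℝ) ^ (n + 1) * iteratedDeriv n g x with hPdef
  have hPpos : ∀ x : ℝ, 0 < x → P x := fun x hx n hn => hsign_pos x hx n hn
  set U : Set ℝ := {x | -α ≤ x ∧ ∀ y, x < y → P y} with hUdef
  have hU0 : (0 : ℝ) ∈ U := ⟨by linarith, fun y hy => hPpos y hy⟩
  have hUne : U.Nonempty := ⟨0, hU0⟩
  have hUbdd : BddBelow U := ⟨-α, fun x hx => hx.1⟩
  set c := sInf U with hcdef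
  have hcge : -α ≤ c := le_csInf hUne fun x hx => hx.1
  have hPc' : ∀ y, c < y → P y := by
    intro y hy
    obtain ⟨x, hxU, hxy⟩ := exists_lt_of_csInf_lt hUne hy
    exact hxU.2 y hxy
  have hkey : c ≤ -α := by
    by_contra hcon
    push_neg at hcon
    have hcmem : c ∈ Set.Ioi (-α) := hcon
    have hPc : P c := by
      intro n hn
      have hcont : ContinuousAt (fun y => (-1 : ℝ) ^ (n + 1) * iteratedDeriv n g y) c :=
        continuousAt_const.mul ((hgan n c hcmem).continuousAt)
      have htd : Filter.Tendsto (fun y => (-1 : ℝ) ^ (n + 1) * iteratedDeriv n g y)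
          (nhdsWithin c (Set.Ioi c)) (nhds ((-1 : ℝ) ^ (n + 1) * iteratedDeriv n g c)) :=
        hcont.tendsto.mono_left nhdsWithin_le_nhds
      refine ge_of_tendsto htd ?_
      filter_upwards [self_mem_nhdsWithin] with y hy
      exact hPc' y hy n hn
    obtain ⟨p, hp⟩ := hg c hcmem
    obtain ⟨r, hr⟩ := hp
    obtain ⟨ε, hε0, hεr⟩ := exists_between hr.r_pos
    have hεtop : ε ≠ ⊤ := (lt_of_lt_of_le hεr le_top).ne
    have hεreal : 0 < ε.toReal := ENNReal.toReal_pos hε0.ne' hεtop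
    set δ := min ε.toReal (c + α) / 2 with hδdef
    have hδ0 : 0 < δ := half_pos (lt_min hεreal (by linarith))
    have hδε : δ < ε.toReal := by
      have h1 := min_le_left ε.toReal (c + α)
      simp only [hδdef]
      linarith
    have hδα : δ < c + α := by
      have h1 := min_le_right ε.toReal (c + α)
      simp only [hδdef]
      linarith
    have htay : ∀ s : ℝ, 0 ≤ s → s < δ → P (c - s) := by
      intro s hs0 hsδ n hn
      have hy : ((‖(-s : ℝ)‖₊ : ENNReal)) < r := by
        have h1 : ((‖(-s : ℝ)‖₊ : ENNReal)) = ENNReal.ofReal s := by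
          rw [nnnorm_neg]
          exact Real.enorm_eq_ofReal hs0
        rw [h1]
        calc ENNReal.ofReal s < ENNReal.ofReal ε.toReal := by
              rw [ENNReal.ofReal_lt_ofReal_iff hεreal]
              linarith
          _ = ε := ENNReal.ofReal_toReal hεtop
          _ < r := hεr
      have hsum := aux_taylor_hasSum hr n (y := -s) hy
      have hsum2 := hsum.mul_left ((-1 : ℝ) ^ (n + 1))
      have heq : c + -s = c - s := by ring
      rw [heq] at hsum2
      refine hasSum_le (fun m => ?_) hasSum_zero hsum2
      show (0 : ℝ) ≤ (-1 : ℝ) ^ (n + 1)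
          * ((m.factorial : ℝ)⁻¹ * ((-s) ^ m * iteratedDeriv (n + m) g c))
      have hterm : (-1 : ℝ) ^ (n + 1)
            * ((m.factorial : ℝ)⁻¹ * ((-s) ^ m * iteratedDeriv (n + m) g c))
          = (m.factorial : ℝ)⁻¹
            * (s ^ m * ((-1 : ℝ) ^ (n + m + 1) * iteratedDeriv (n + m) g c)) := by
        rw [neg_pow]
        ring
      rw [hterm]
      have h5 : 0 ≤ (-1 : ℝ) ^ (n + m + 1) * iteratedDeriv (n + m) g c :=
        hPc (n + m) (by omega)
      exact mul_nonneg (by positivity) (mul_nonneg (pow_nonneg hs0 m) h5)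
    have hmemU : c - δ / 2 ∈ U := by
      constructor
      · show -α ≤ c - δ / 2
        linarith
      · intro y hy
        rcases lt_or_ge c y with h | h
        · exact hPc' y h
        · have h1 : 0 ≤ c - y := by linarith
          have h2 : c - y < δ := by
            show c - y < δ
            have : c - δ / 2 < y := hy
            linarith
          have := htay (c - y) h1 h2
          simpa using this
    have hfin := csInf_le hUbdd hmemU
    rw [← hcdef] at hfin
    linarith
  intro k hk x hx
  exact hPc' x (lt_of_le_of_lt hkey hx) k hk
end

section
/- Let n ≥ 1, t > 0, and let u : ℝⁿ → ℝ be a bounded continuous function. Define v : ℝⁿ → ℝ by v(x) = (2πt)^{-n/2} ∫_{ℝⁿ} u(y) · exp(−|x−y|²/(2t)) dy (the heat semigroup applied to u). If v vanishes on some nonempty open subset of ℝⁿ, then v vanishes identically on ℝⁿ. In particular, the semigroup generated by Brownian motion satisfies the unique continuation principle, even though its generator (1/2)Δ, being a local operator, does not. -/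
open MeasureTheory Real Filter Metric
open scoped RealInnerProductSpace

lemma gauss_integrable (n : ℕ) (c K : ℝ) (hc : 0 < c) (x₀ : EuclideanSpace ℝ (Fin n)) :
    Integrable (fun y : EuclideanSpace ℝ (Fin n) => K * Real.exp (-(c * ‖x₀ - y‖ ^ 2))) := by
  have h0 : Integrable (fun w : EuclideanSpace ℝ (Fin n) =>
      Complex.exp (-(c : ℂ) * ‖w‖ ^ 2 + 0 * ⟪(0 : EuclideanSpace ℝ (Fin n)), w⟫)) :=
    GaussianFourier.integrable_cexp_neg_mul_sq_norm_add (by simpa using hc) 0 0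
  have h1 : Integrable (fun w : EuclideanSpace ℝ (Fin n) => Real.exp (-(c * ‖w‖ ^ 2))) := by
    have := h0.norm
    convert this using 2 with w
    rw [zero_mul, add_zero]
    rw [show -(c:ℂ) * (‖w‖:ℂ)^2 = ((-(c * ‖w‖^2) : ℝ) : ℂ) by push_cast; ring]
    rw [Complex.norm_exp, Complex.ofReal_re]
  have h2 := (h1.comp_sub_right x₀).const_mul K
  refine h2.congr (Eventually.of_forall fun y => ?_)
  simp only
  rw [norm_sub_rev]

lemma keyJ (n : ℕ) (t : ℝ) (ht : 0 < t)
    (u : EuclideanSpace ℝ (Fin n) → ℝ) (hu : Continuous u)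
    (M : ℝ) (hM : ∀ x, |u x| ≤ M)
    (x₀ d : EuclideanSpace ℝ (Fin n)) (δ : ℝ) (hδ : 0 < δ)
    (hJ : ∀ s : ℝ, |s| < δ →
      (∫ y, u y * Real.exp (-‖x₀ - y‖ ^ 2 / (2 * t) - s * (⟪d, x₀ - y⟫ / t))) = 0) :
    (∫ y, u y * Real.exp (-‖x₀ - y‖ ^ 2 / (2 * t) - 1 * (⟪d, x₀ - y⟫ / t))) = 0 := by
  set A : EuclideanSpace ℝ (Fin n) → ℝ := fun y => -‖x₀ - y‖ ^ 2 / (2 * t) with hA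
  set B : EuclideanSpace ℝ (Fin n) → ℝ := fun y => ⟪d, x₀ - y⟫ / t with hB
  set f : ℂ → EuclideanSpace ℝ (Fin n) → ℂ :=
    fun s y => (u y : ℂ) * Complex.exp ((A y : ℂ) - s * (B y : ℂ)) with hf
  set f' : ℂ → EuclideanSpace ℝ (Fin n) → ℂ :=
    fun s y => (u y : ℂ) * (Complex.exp ((A y : ℂ) - s * (B y : ℂ)) * (-(B y : ℂ))) with hf'
  set F : ℂ → ℂ := fun s => ∫ y, f s y with hF
  have hM0 : 0 ≤ M := le_trans (abs_nonneg _) (hM 0)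
  have hBle : ∀ y : EuclideanSpace ℝ (Fin n), |B y| ≤ ‖d‖ * ‖x₀ - y‖ / t := by
    intro y
    rw [hB]
    simp only
    rw [abs_div, abs_of_pos ht]
    gcongr
    exact abs_real_inner_le_norm _ _
  have hcontB : Continuous B := by
    rw [hB]
    exact (Continuous.inner continuous_const (continuous_const.sub continuous_id)).div_const t
  have hcontA : Continuous A := by
    rw [hA]
    exact (((continuous_const.sub continuous_id).norm.pow 2).neg).div_const (2 * t)
  have hcont : ∀ s : ℂ, Continuous (f s) := by
    intro s
    rw [hf]
    apply Continuous.mul (Complex.continuous_ofReal.comp hu)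
    exact Complex.continuous_exp.comp
      ((Complex.continuous_ofReal.comp hcontA).sub
        (continuous_const.mul (Complex.continuous_ofReal.comp hcontB)))
  have hcont' : ∀ s : ℂ, Continuous (f' s) := by
    intro s
    rw [hf']
    apply Continuous.mul (Complex.continuous_ofReal.comp hu)
    exact (Complex.continuous_exp.comp
      ((Complex.continuous_ofReal.comp hcontA).sub
        (continuous_const.mul (Complex.continuous_ofReal.comp hcontB)))).mul
      (Complex.continuous_ofReal.comp hcontB).neg
  have hre : ∀ (s : ℂ) y, ((A y : ℂ) - s * (B y : ℂ)).re = A y - s.re * B y := by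
    intro s y
    simp [Complex.sub_re, Complex.mul_re, Complex.ofReal_re, Complex.ofReal_im]
  have hnorm : ∀ (s : ℂ) y, ‖f s y‖ = |u y| * Real.exp (A y - s.re * B y) := by
    intro s y
    rw [hf]
    simp only [norm_mul, Complex.norm_real, Real.norm_eq_abs,
      Complex.norm_exp, hre s y]
  have hnorm' : ∀ (s : ℂ) y, ‖f' s y‖ = |u y| * (Real.exp (A y - s.re * B y) * |B y|) := by
    intro s y
    rw [hf']
    simp only [norm_mul, Complex.norm_real, Real.norm_eq_abs,
      Complex.norm_exp, norm_neg, hre s y]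
  have hexp : ∀ (R : ℝ), 0 ≤ R → ∀ (s : ℂ), ‖s‖ ≤ R → ∀ y,
      A y - s.re * B y ≤ -‖x₀ - y‖^2/(2*t) + R * ‖d‖ * ‖x₀ - y‖ / t := by
    intro R hR s hs y
    have h1 : -(s.re * B y) ≤ |s.re * B y| := neg_le_abs _
    have h2 : |s.re * B y| = |s.re| * |B y| := abs_mul _ _
    have h3 : |s.re| ≤ R := le_trans (by exact Complex.abs_re_le_norm s : |s.re| ≤ ‖s‖) hs
    have h4 : |s.re| * |B y| ≤ R * (‖d‖ * ‖x₀ - y‖ / t) :=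
      mul_le_mul h3 (hBle y) (abs_nonneg _) hR
    have h4' : R * (‖d‖ * ‖x₀ - y‖ / t) = R * ‖d‖ * ‖x₀ - y‖ / t := by ring
    have h5 : A y = -‖x₀ - y‖^2/(2*t) := by rw [hA]
    rw [h5]
    rw [h4'] at h4
    have := h1.trans (h2.le.trans h4)
    linarith [this]
  have hfbound : ∀ (R : ℝ), 0 ≤ R → ∀ (s : ℂ), ‖s‖ ≤ R → ∀ y,
      ‖f s y‖ ≤ (M * Real.exp (R^2 * ‖d‖^2 / t)) * Real.exp (-(1/(4*t) * ‖x₀ - y‖^2)) := by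
    intro R hR s hs y
    rw [hnorm]
    set r := ‖x₀ - y‖ with hr
    have hr0 : 0 ≤ r := norm_nonneg _
    have he1 : A y - s.re * B y ≤ R^2 * ‖d‖^2 / t + (-(1/(4*t) * r^2)) := by
      have h0 := hexp R hR s hs y
      have hq : (R^2 * ‖d‖^2 / t + (-(1/(4*t) * r^2))) - (-r^2/(2*t) + R * ‖d‖ * r / t)
          = (r - 2*R*‖d‖)^2 / (4*t) := by field_simp; ring
      nlinarith [div_nonneg (sq_nonneg (r - 2*R*‖d‖)) (by linarith : (0:ℝ) ≤ 4*t)]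
    calc |u y| * Real.exp (A y - s.re * B y)
        ≤ M * Real.exp (R^2 * ‖d‖^2 / t + (-(1/(4*t) * r^2))) :=
          mul_le_mul (hM y) (Real.exp_le_exp.mpr he1) (Real.exp_nonneg _) hM0
      _ = (M * Real.exp (R^2 * ‖d‖^2 / t)) * Real.exp (-(1/(4*t) * r^2)) := by
          rw [Real.exp_add]; ring
  have hfbound' : ∀ (R : ℝ), 0 ≤ R → ∀ (s : ℂ), ‖s‖ ≤ R → ∀ y,
      ‖f' s y‖ ≤ (M * (‖d‖/t) * Real.exp (R^2 * ‖d‖^2 / t + 2*t)) *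
        Real.exp (-(1/(8*t) * ‖x₀ - y‖^2)) := by
    intro R hR s hs y
    rw [hnorm']
    set r := ‖x₀ - y‖ with hr
    have hr0 : 0 ≤ r := norm_nonneg _
    have hd0 : (0:ℝ) ≤ ‖d‖ := norm_nonneg _
    have he0 := hexp R hR s hs y
    have hstep1 : |u y| * (Real.exp (A y - s.re * B y) * |B y|) ≤
        M * (Real.exp (-r^2/(2*t) + R * ‖d‖ * r / t) * (‖d‖ * r / t)) := by
      apply mul_le_mul (hM y) _ (by positivity) hM0
      exact mul_le_mul (Real.exp_le_exp.mpr he0) (hBle y) (abs_nonneg _) (Real.exp_nonneg _)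
    have hstep2 : Real.exp (-r^2/(2*t) + R * ‖d‖ * r / t) * (‖d‖ * r / t) ≤
        (‖d‖/t) * Real.exp (R^2 * ‖d‖^2 / t + 2*t + (-(1/(8*t) * r^2))) := by
      have hrexp : r ≤ Real.exp r := by linarith [Real.add_one_le_exp r]
      have hsum : r + (-r^2/(2*t) + R * ‖d‖ * r / t) ≤
          R^2 * ‖d‖^2 / t + 2*t + (-(1/(8*t) * r^2)) := by
        have hq : (R^2 * ‖d‖^2 / t + 2*t + (-(1/(8*t) * r^2)))
            - (r + (-r^2/(2*t) + R * ‖d‖ * r / t))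
            = ((4*t - r)^2 + 2*(r - 2*R*‖d‖)^2) / (8*t) := by field_simp; ring
        nlinarith [div_nonneg (by nlinarith [sq_nonneg (4*t - r), sq_nonneg (r - 2*R*‖d‖)] :
          (0:ℝ) ≤ (4*t - r)^2 + 2*(r - 2*R*‖d‖)^2) (by linarith : (0:ℝ) ≤ 8*t)]
      calc Real.exp (-r^2/(2*t) + R * ‖d‖ * r / t) * (‖d‖ * r / t)
          = (‖d‖/t) * (r * Real.exp (-r^2/(2*t) + R * ‖d‖ * r / t)) := by ring
        _ ≤ (‖d‖/t) * (Real.exp r * Real.exp (-r^2/(2*t) + R * ‖d‖ * r / t)) := by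
            apply mul_le_mul_of_nonneg_left _ (by positivity)
            exact mul_le_mul_of_nonneg_right hrexp (Real.exp_nonneg _)
        _ = (‖d‖/t) * Real.exp (r + (-r^2/(2*t) + R * ‖d‖ * r / t)) := by
            rw [← Real.exp_add]
        _ ≤ (‖d‖/t) * Real.exp (R^2 * ‖d‖^2 / t + 2*t + (-(1/(8*t) * r^2))) :=
            mul_le_mul_of_nonneg_left (Real.exp_le_exp.mpr hsum) (by positivity)
    calc |u y| * (Real.exp (A y - s.re * B y) * |B y|)
        ≤ M * (Real.exp (-r^2/(2*t) + R * ‖d‖ * r / t) * (‖d‖ * r / t)) := hstep1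
      _ ≤ M * ((‖d‖/t) * Real.exp (R^2 * ‖d‖^2 / t + 2*t + (-(1/(8*t) * r^2)))) :=
          mul_le_mul_of_nonneg_left hstep2 hM0
      _ = (M * (‖d‖/t) * Real.exp (R^2 * ‖d‖^2 / t + 2*t)) * Real.exp (-(1/(8*t) * r^2)) := by
          rw [Real.exp_add]; ring
  have hInt : ∀ s : ℂ, Integrable (f s) := by
    intro s
    exact Integrable.mono'
      (gauss_integrable n (1/(4*t)) (M * Real.exp (‖s‖^2 * ‖d‖^2 / t)) (by positivity) x₀)
      (hcont s).aestronglyMeasurable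
      (Eventually.of_forall fun y => hfbound ‖s‖ (norm_nonneg s) s le_rfl y)
  have hderiv : ∀ s₀ : ℂ, HasDerivAt F (∫ y, f' s₀ y) s₀ := by
    intro s₀
    set R : ℝ := ‖s₀‖ + 1 with hR
    have hR0 : 0 ≤ R := by positivity
    have h := hasDerivAt_integral_of_dominated_loc_of_deriv_le (F := f) (F' := f')
      (bound := fun y => (M * (‖d‖/t) * Real.exp (R^2 * ‖d‖^2 / t + 2*t)) *
        Real.exp (-(1/(8*t) * ‖x₀ - y‖^2)))
      (ball_mem_nhds s₀ one_pos)
      (Eventually.of_forall fun s => (hcont s).aestronglyMeasurable)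
      (hInt s₀)
      (hcont' s₀).aestronglyMeasurable
      (Eventually.of_forall fun y s hs => by
        apply hfbound' R hR0 s _ y
        have h1 : ‖s - s₀‖ < 1 := by
          have := mem_ball.mp hs
          rwa [dist_eq_norm] at this
        calc ‖s‖ = ‖s₀ + (s - s₀)‖ := by ring_nf
          _ ≤ ‖s₀‖ + ‖s - s₀‖ := norm_add_le _ _
          _ ≤ R := by rw [hR]; linarith)
      (gauss_integrable n (1/(8*t)) _ (by positivity) x₀)
      (Eventually.of_forall fun y s hs => by
        have h1 : HasDerivAt (fun s : ℂ => (A y : ℂ) - s * (B y : ℂ)) (-(B y : ℂ)) s := by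
          simpa using ((hasDerivAt_id s).mul_const ((B y : ℂ))).const_sub ((A y : ℂ))
        simp only [hf, hf']
        exact h1.cexp.const_mul ((u y : ℂ)))
    exact h.2
  have hFdiff : Differentiable ℂ F := fun s => (hderiv s).differentiableAt
  have hFreal : ∀ s : ℝ, F (s : ℂ) = ((∫ y, u y * Real.exp (A y - s * B y) : ℝ) : ℂ) := by
    intro s
    have h1 : ∀ y, f (s : ℂ) y = ((u y * Real.exp (A y - s * B y) : ℝ) : ℂ) := by
      intro y
      rw [hf]
      push_cast
      ring
    rw [hF]
    simp only [h1]
    exact integral_ofReal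
  have hcongr : ∀ s : ℝ, (fun y : EuclideanSpace ℝ (Fin n) => u y * Real.exp (A y - s * B y))
      = fun y => u y * Real.exp (-‖x₀ - y‖ ^ 2 / (2 * t) - s * (⟪d, x₀ - y⟫ / t)) := by
    intro s
    funext y
    rw [hA, hB]
  have hzero : ∀ s : ℝ, |s| < δ → F (s : ℂ) = 0 := by
    intro s hs
    rw [hFreal s, hcongr s]
    exact_mod_cast hJ s hs
  have hfreq : ∃ᶠ z in nhdsWithin (0:ℂ) {(0:ℂ)}ᶜ, F z = 0 := by
    rw [frequently_iff]
    intro U hU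
    obtain ⟨ε', hε', hball⟩ := Metric.mem_nhdsWithin_iff.mp hU
    set s : ℝ := min δ ε' / 2 with hs
    have hs0 : 0 < s := by positivity
    have hsδ : s < δ := by
      have h := min_le_left δ ε'
      rw [hs]; linarith
    have hsε : s < ε' := by
      have h := min_le_right δ ε'
      rw [hs]; linarith
    refine ⟨(s : ℂ), hball ⟨?_, ?_⟩, hzero s (by rw [abs_of_pos hs0]; exact hsδ)⟩
    · simp only [Metric.mem_ball, dist_zero_right, Complex.norm_real, Real.norm_eq_abs]
      rw [abs_of_pos hs0]; exact hsε
    · simp only [Set.mem_compl_iff, Set.mem_singleton_iff]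
      exact_mod_cast hs0.ne'
  have hF1 : F 1 = 0 := by
    have han : AnalyticOnNhd ℂ F Set.univ := hFdiff.differentiableOn.analyticOnNhd isOpen_univ
    exact han.eqOn_zero_of_preconnected_of_frequently_eq_zero isPreconnected_univ
      (Set.mem_univ 0) hfreq (Set.mem_univ 1)
  have h1 := hFreal 1
  rw [show ((1:ℝ):ℂ) = 1 by norm_num, hF1] at h1
  have h0 : (∫ y, u y * Real.exp (A y - 1 * B y)) = 0 := by exact_mod_cast h1.symm
  rw [hcongr 1] at h0
  exact h0

/-- The heat semigroup satisfies the unique continuation principle: if `u` is bounded and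
continuous and `v = p_t * u` (convolution with the Gaussian kernel) vanishes on some nonempty
open set, then `v ≡ 0`. -/
theorem heat_semigroup_ucp
    (n : ℕ) (hn : 1 ≤ n) (t : ℝ) (ht : 0 < t)
    (u : EuclideanSpace ℝ (Fin n) → ℝ)
    (hu : Continuous u) (hub : ∃ M : ℝ, ∀ x, |u x| ≤ M)
    (v : EuclideanSpace ℝ (Fin n) → ℝ)
    (hv : ∀ x : EuclideanSpace ℝ (Fin n),
      v x = (2 * π * t) ^ (-(n : ℝ) / 2) *
        ∫ y : EuclideanSpace ℝ (Fin n), u y * Real.exp (-‖x - y‖ ^ 2 / (2 * t)))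
    (G : Set (EuclideanSpace ℝ (Fin n))) (hG : IsOpen G) (hGne : G.Nonempty)
    (hvG : ∀ x ∈ G, v x = 0) :
    v = 0 := by
  obtain ⟨M, hM⟩ := hub
  obtain ⟨x₀, hx₀⟩ := hGne
  obtain ⟨ε, hε, hball⟩ := Metric.isOpen_iff.mp hG x₀ hx₀
  funext z
  simp only [Pi.zero_apply]
  set d : EuclideanSpace ℝ (Fin n) := z - x₀ with hd
  set δ : ℝ := ε / (‖d‖ + 1) with hδdef
  have hd0 : (0:ℝ) ≤ ‖d‖ := norm_nonneg _
  have hδ : 0 < δ := by positivity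
  have hC : (0:ℝ) < (2 * π * t) ^ (-(n : ℝ) / 2) :=
    Real.rpow_pos_of_pos (by positivity) _
  have hsplit : ∀ s : ℝ, (∫ y, u y * Real.exp (-‖(x₀ + s • d) - y‖^2/(2*t)))
      = Real.exp (-(s^2 * ‖d‖^2)/(2*t)) *
        ∫ y, u y * Real.exp (-‖x₀ - y‖^2/(2*t) - s * (⟪d, x₀ - y⟫/t)) := by
    intro s
    rw [← integral_const_mul]
    congr 1
    funext y
    have hvec : (x₀ + s • d) - y = (x₀ - y) + s • d := by
      module
    have hnormeq : ‖(x₀ + s • d) - y‖^2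
        = ‖x₀ - y‖^2 + 2*(s * ⟪d, x₀ - y⟫) + s^2*‖d‖^2 := by
      rw [hvec, norm_add_sq_real, real_inner_smul_right, real_inner_comm, norm_smul]
      simp only [Real.norm_eq_abs, mul_pow, sq_abs]
    have hsum : -‖(x₀ + s • d) - y‖^2/(2*t)
        = (-(s^2 * ‖d‖^2)/(2*t)) + (-‖x₀ - y‖^2/(2*t) - s * (⟪d, x₀ - y⟫/t)) := by
      rw [hnormeq]
      field_simp
      ring
    rw [hsum, Real.exp_add]
    ring
  have hJ : ∀ s : ℝ, |s| < δ →
      (∫ y, u y * Real.exp (-‖x₀ - y‖^2/(2*t) - s * (⟪d, x₀ - y⟫/t))) = 0 := by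
    intro s hs
    have habs : 0 ≤ |s| := abs_nonneg s
    have hmem : x₀ + s • d ∈ G := by
      apply hball
      rw [mem_ball, dist_eq_norm]
      have hv2 : x₀ + s • d - x₀ = s • d := add_sub_cancel_left x₀ (s • d)
      rw [hv2, norm_smul, Real.norm_eq_abs]
      have hde : δ * (‖d‖ + 1) = ε := by
        rw [hδdef]
        field_simp
      calc |s| * ‖d‖ ≤ |s| * (‖d‖ + 1) := by nlinarith
        _ < δ * (‖d‖ + 1) := by nlinarith
        _ = ε := hde
    have h0 := hvG _ hmem
    rw [hv, hsplit s] at h0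
    rcases mul_eq_zero.mp h0 with h | h
    · exact absurd h hC.ne'
    rcases mul_eq_zero.mp h with h' | h'
    · exact absurd h' (Real.exp_pos _).ne'
    · exact h'
  have hkey := keyJ n t ht u hu M hM x₀ d δ hδ hJ
  have hz : z = x₀ + (1:ℝ) • d := by
    rw [hd, one_smul, add_sub_cancel]
  rw [hz, hv, hsplit 1, hkey]
  ring
end

section
/- Let n ≥ 1 and let ν : ℤⁿ \ {0} → [0,∞) be a weight function (a Lévy measure on the lattice) whose support {j : ν(j) > 0} is infinite. Then for every h > 0 there exists a finitely supported function u : ℤⁿ → ℝ with u ≠ 0 such that u(k) = 0 for all k ∈ ℤⁿ with |k| ≤ h, and Σ_{j∈ℤⁿ\{0}} u(k+j)·ν(j) = 0 for all k ∈ ℤⁿ with |k| ≤ h (each such sum has only finitely many nonzero terms since u is finitely supported). In other words, the unique continuation property relative to the bounded set B_h(0) ∩ ℤⁿ always fails for discrete Lévy operators whose Lévy measure has infinite support. -/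
/-- The unique continuation property relative to a bounded set always fails for discrete
Lévy operators whose Lévy measure has infinite support: for every `h > 0` there is a nonzero
finitely supported `u : ℤⁿ → ℝ` with `u(k) = 0` and `Σ_j u(k+j)·ν(j) = 0` for every lattice
point `k` with `|k| ≤ h`. -/
theorem discrete_levy_bounded_ucp_fails
    (n : ℕ) (hn : 1 ≤ n)
    (ν : (Fin n → ℤ) → ℝ)
    (hν0 : ν 0 = 0) (hνnn : ∀ j, 0 ≤ ν j)
    (hνinf : {j : Fin n → ℤ | ν j ≠ 0}.Infinite)
    (h : ℝ) (hh : 0 < h) :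
    ∃ u : (Fin n → ℤ) → ℝ,
      (Function.support u).Finite ∧ u ≠ 0 ∧
      (∀ k : Fin n → ℤ, (∑ i, ((k i : ℝ)) ^ 2) ≤ h ^ 2 → u k = 0) ∧
      (∀ k : Fin n → ℤ, (∑ i, ((k i : ℝ)) ^ 2) ≤ h ^ 2 →
        ∑' j : Fin n → ℤ, u (k + j) * ν j = 0) := by
  haveI : Nonempty (Fin n) := ⟨⟨0, hn⟩⟩
  -- The ball is finite.
  set B : Set (Fin n → ℤ) := {k | (∑ i, ((k i : ℝ)) ^ 2) ≤ h ^ 2} with hBdef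
  have hBfin : B.Finite := by
    apply Set.Finite.subset (Finset.Icc (fun _ : Fin n => -(⌈h⌉₊ : ℤ))
      (fun _ : Fin n => (⌈h⌉₊ : ℤ))).finite_toSet
    intro k hk
    simp only [Finset.coe_Icc, Set.mem_Icc, Pi.le_def]
    have key : ∀ i, |k i| ≤ (⌈h⌉₊ : ℤ) := by
      intro i
      have h1 : ((k i : ℝ)) ^ 2 ≤ h ^ 2 := by
        refine le_trans ?_ hk
        exact Finset.single_le_sum (f := fun i => ((k i : ℝ)) ^ 2)
          (fun i _ => sq_nonneg _) (Finset.mem_univ i)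
      have h2 : |(k i : ℝ)| ≤ h := by
        have := abs_le_of_sq_le_sq' h1 hh.le
        exact abs_le.mpr this
      have h3 : (|k i| : ℝ) ≤ (⌈h⌉₊ : ℤ) := by
        push_cast
        exact h2.trans (Nat.le_ceil h)
      exact_mod_cast h3
    exact ⟨fun i => neg_le_of_abs_le (key i), fun i => le_of_abs_le (key i)⟩
  classical
  set S : Finset (Fin n → ℤ) := hBfin.toFinset with hSdef
  -- Choose S.card + 1 points outside B.
  have hBc : Bᶜ.Infinite := hBfin.infinite_compl
  obtain ⟨T, hTsub, hTcard⟩ := hBc.exists_subset_card_eq (S.card + 1)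
  -- The linear system.
  set M : Matrix {x // x ∈ S} {x // x ∈ T} ℝ := fun k m => ν ((m : Fin n → ℤ) - k) with hMdef
  have hker : LinearMap.ker M.mulVecLin ≠ ⊥ := by
    apply LinearMap.ker_ne_bot_of_finrank_lt
    simp only [Module.finrank_fintype_fun_eq_card, Fintype.card_coe]
    rw [hTcard]
    exact Nat.lt_succ_self _
  obtain ⟨c, hc, hc0⟩ := (Submodule.ne_bot_iff _).mp hker
  refine ⟨fun m => if hm : m ∈ T then c ⟨m, hm⟩ else 0, ?_, ?_, ?_, ?_⟩
  · apply Set.Finite.subset T.finite_toSet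
    intro m hm
    simp only [Function.mem_support] at hm
    by_contra hmT
    exact hm (dif_neg hmT)
  · intro hu0
    apply hc0
    funext m
    have := congrFun hu0 (m : Fin n → ℤ)
    simpa [m.2] using this
  · intro k hk
    have hkT : k ∉ T := fun hkT => (hTsub hkT) hk
    exact dif_neg hkT
  · intro k hk
    have hkS : k ∈ S := by simpa [hSdef, hBdef] using hk
    have e1 : ∑' j : Fin n → ℤ, (if hm : k + j ∈ T then c ⟨k + j, hm⟩ else 0) * ν j
        = ∑' m : Fin n → ℤ, (if hm : m ∈ T then c ⟨m, hm⟩ else 0) * ν (m - k) := by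
      rw [← (Equiv.addLeft k).tsum_eq
        (fun m => (if hm : m ∈ T then c ⟨m, hm⟩ else 0) * ν (m - k))]
      simp [Equiv.addLeft]
    rw [e1]
    rw [tsum_eq_sum (s := T) (by intro m hm; simp [dif_neg hm])]
    have e2 : ∑ m ∈ T, (if hm : m ∈ T then c ⟨m, hm⟩ else 0) * ν (m - k)
        = ∑ m : {x // x ∈ T}, c m * ν ((m : Fin n → ℤ) - k) := by
      rw [← Finset.sum_coe_sort]
      exact Finset.sum_congr rfl fun m _ => by rw [dif_pos m.2]
    rw [e2]
    have := congrFun (LinearMap.mem_ker.mp hc) ⟨k, hkS⟩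
    simp only [Matrix.mulVecLin_apply, Matrix.mulVec, dotProduct, hMdef,
      Pi.zero_apply] at this
    rw [← this]
    exact Finset.sum_congr rfl fun m _ => mul_comm _ _
end
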